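/- arXiv:1710.09462 — 10 statements merged into one kernel-verified Lean document; each statement's English description precedes it below -/
import Mathlib

section
/- For every integer N ≥ 2, the function f_*(x) = N^{-2/(N-1)} · (1-x)^{-(3-b)} · (N-x)^{-b}, with b = (N-2)/(N-1), is a probability density on [0, N/(N+1)]: it satisfies ∫_0^{N/(N+1)} f_*(x) dx = 1. -/
open Real MeasureTheory

lemma fstar_aux_deriv (n p x : ℝ) (hp : p * (n-1) = 1) (hx1 : 0 < 1 - x)
    (hxn : 0 < n - x) (hn0 : 0 < n) :
    HasDerivAt (fun y => y * (n - y) ^ p / (n * (1 - y) ^ (p+1)))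
      (1 / ((1-x)^(p+2) * (n-x)^(1-p))) x := by
  have h1 : HasDerivAt (fun y : ℝ => (n - y) ^ p) (-1 * p * (n - x) ^ (p-1)) x := by
    have := ((hasDerivAt_id x).const_sub n).rpow_const (p := p) (Or.inl hxn.ne')
    simpa using this
  have h2 : HasDerivAt (fun y : ℝ => (1 - y) ^ (p+1)) (-1 * (p+1) * (1 - x) ^ (p+1-1)) x := by
    have := ((hasDerivAt_id x).const_sub 1).rpow_const (p := p+1) (Or.inl hx1.ne')
    simpa using this
  have hnum : HasDerivAt (fun y => y * (n - y) ^ p)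
      (1 * (n-x)^p + x * (-1 * p * (n - x) ^ (p-1))) x := (hasDerivAt_id x).mul h1
  have hden : HasDerivAt (fun y => n * (1 - y) ^ (p+1))
      (n * (-1 * (p+1) * (1 - x) ^ (p+1-1))) x := h2.const_mul n
  have hBpos : 0 < (1-x)^(p+1) := rpow_pos_of_pos hx1 _
  have hden_ne : n * (1-x)^(p+1) ≠ 0 := by positivity
  have hdiv := hnum.div hden hden_ne
  refine hdiv.congr_deriv (Eq.symm ?_)
  have hA : (0:ℝ) < (n-x)^p := rpow_pos_of_pos hxn _
  have e1 : (n-x)^(p-1) = (n-x)^p / (n-x) := by rw [rpow_sub hxn, rpow_one]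
  have e2 : (1-x)^(p+1-1) = (1-x)^(p+1) / (1-x) := by rw [rpow_sub hx1, rpow_one]
  have e3 : (1-x)^(p+2) = (1-x)^(p+1) * (1-x) := by
    rw [show p+2 = (p+1)+1 by ring, rpow_add hx1, rpow_one]
  have e4 : (n-x)^(1-p) = (n-x) / (n-x)^p := by rw [rpow_sub hxn, rpow_one]
  rw [e1, e2, e3, e4]
  field_simp
  linear_combination (-x) * hp

/-- For every integer `N ≥ 2`, the Nash-equilibrium density
`f_*(x) = N^{-2/(N-1)} (1-x)^{-(3-b)} (N-x)^{-b}` with `b = (N-2)/(N-1)`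
integrates to `1` over its support `[0, N/(N+1)]`. -/
theorem fstar_integral_eq_one (N : ℕ) (hN : 2 ≤ N) :
    ∫ x in (0:ℝ)..((N:ℝ)/((N:ℝ)+1)),
      (N:ℝ) ^ (-(2:ℝ)/((N:ℝ)-1)) /
        ((1-x) ^ ((3:ℝ) - ((N:ℝ)-2)/((N:ℝ)-1)) * ((N:ℝ)-x) ^ (((N:ℝ)-2)/((N:ℝ)-1))) = 1 := by
  have hn2 : (2:ℝ) ≤ (N:ℝ) := by exact_mod_cast hN
  set n : ℝ := (N:ℝ) with hndef
  have hn0 : 0 < n := by linarith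
  have hd : 0 < n - 1 := by linarith
  have hn1 : 0 < n + 1 := by linarith
  set p : ℝ := 1/(n-1) with hpdef
  have hp : p * (n-1) = 1 := by rw [hpdef]; field_simp
  set a : ℝ := n/(n+1) with hadef
  have ha0 : (0:ℝ) ≤ a := by positivity
  have ha1 : a < 1 := by rw [hadef, div_lt_one hn1]; linarith
  have han : a < n := by rw [hadef, div_lt_iff₀ hn1]; nlinarith
  have hb1 : (n-2)/(n-1) = 1 - p := by rw [hpdef]; field_simp; ring
  have hb2 : (3:ℝ) - (n-2)/(n-1) = p + 2 := by rw [hb1]; ring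
  have hkey : ∀ x ∈ Set.uIcc (0:ℝ) a,
      HasDerivAt (fun y => y * (n - y) ^ p / (n * (1 - y) ^ (p+1)))
        (1 / ((1-x)^(p+2) * (n-x)^(1-p))) x := by
    intro x hx
    rw [Set.uIcc_of_le ha0] at hx
    exact fstar_aux_deriv n p x hp (by linarith [hx.2]) (by linarith [hx.2]) hn0
  have hcont : ContinuousOn (fun x : ℝ => 1 / ((1-x)^(p+2) * (n-x)^(1-p)))
      (Set.uIcc (0:ℝ) a) := by
    rw [Set.uIcc_of_le ha0]
    apply ContinuousOn.div continuousOn_const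
    · apply ContinuousOn.mul
      · apply ContinuousOn.rpow_const (continuous_const.sub continuous_id).continuousOn
        intro x hx
        left
        have : x ≤ a := hx.2
        intro h; simp only [Pi.sub_apply, id_eq] at h; nlinarith [hndef]
      · apply ContinuousOn.rpow_const (continuous_const.sub continuous_id).continuousOn
        intro x hx
        left
        have : x ≤ a := hx.2
        intro h; simp only [Pi.sub_apply, id_eq] at h; nlinarith [hndef]
    · intro x hx
      have h1 : 0 < 1 - x := by have := hx.2; linarith
      have h2 : 0 < n - x := by have := hx.2; linarith
      positivity
  have hFTC := intervalIntegral.integral_eq_sub_of_hasDerivAt hkey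
    hcont.intervalIntegrable
  have hrw : ∀ x : ℝ, n ^ (-(2:ℝ)/(n-1)) /
      ((1-x) ^ ((3:ℝ) - (n-2)/(n-1)) * (n-x) ^ ((n-2)/(n-1)))
      = n ^ (-(2:ℝ)/(n-1)) * (1 / ((1-x)^(p+2) * (n-x)^(1-p))) := by
    intro x; rw [hb2, hb1]; ring
  calc ∫ x in (0:ℝ)..a, n ^ (-(2:ℝ)/(n-1)) /
        ((1-x) ^ ((3:ℝ) - (n-2)/(n-1)) * (n-x) ^ ((n-2)/(n-1)))
      = ∫ x in (0:ℝ)..a, n ^ (-(2:ℝ)/(n-1)) *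
        (1 / ((1-x)^(p+2) * (n-x)^(1-p))) := by simp_rw [hrw]
    _ = n ^ (-(2:ℝ)/(n-1)) * ∫ x in (0:ℝ)..a,
        (1 / ((1-x)^(p+2) * (n-x)^(1-p))) := intervalIntegral.integral_const_mul _ _
    _ = 1 := by
        rw [hFTC]
        have h1a : 1 - a = 1/(n+1) := by rw [hadef]; field_simp; ring
        have hna : n - a = n^2/(n+1) := by rw [hadef]; field_simp; ring
        have hgA : (n - a)^p = n^(2*p) / (n+1)^p := by
          rw [hna, div_rpow (by positivity) (by positivity)]
          congr 1
          rw [← rpow_natCast n 2, ← rpow_mul hn0.le]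
          norm_num
        have hgB : (1 - a)^(p+1) = 1/(n+1)^(p+1) := by
          rw [h1a, div_rpow zero_le_one (by positivity), one_rpow]
        have hsplit : (n+1:ℝ)^(p+1) = (n+1)^p * (n+1) := by
          rw [rpow_add hn1, rpow_one]
        have hC : n ^ (-(2:ℝ)/(n-1)) * n ^ (2*p) = 1 := by
          rw [← rpow_add hn0, show -(2:ℝ)/(n-1) + 2*p = 0 by rw [hpdef]; ring,
            rpow_zero]
        have hPpos : (0:ℝ) < (n+1)^p := rpow_pos_of_pos hn1 _
        have hNpos : (0:ℝ) < n^(2*p) := rpow_pos_of_pos hn0 _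
        rw [hgA, hgB, hsplit, hadef]
        field_simp
        rw [← neg_div, sub_zero, one_rpow]
        linear_combination n * hC
end

section
/- For every integer N ≥ 2 and every x ∈ [0, N/(N+1)], the function U_*(x) = ∫_0^x (1-s) f_*(s) ds + ∫_0^1 s f_*(s) ds satisfies the closed-form identity U_*(x) = ( (N-x) / (N^2 (1-x)) )^{1/(N-1)}. -/
open Real MeasureTheory

/-- The Nash-equilibrium density of the `N`-player elimination game:
`f_*(x) = C_N / ((1-x)^{3-b} (N-x)^b)` on `[0, N/(N+1)]`, and `0` above the support,
where `b = (N-2)/(N-1)` and `C_N = N^{-2/(N-1)}`. -/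
noncomputable def fstar (N : ℕ) (x : ℝ) : ℝ :=
  if x ≤ (N:ℝ)/((N:ℝ)+1) then
    (N:ℝ) ^ (-(2:ℝ)/((N:ℝ)-1)) /
      ((1-x) ^ ((3:ℝ) - ((N:ℝ)-2)/((N:ℝ)-1)) * ((N:ℝ)-x) ^ (((N:ℝ)-2)/((N:ℝ)-1)))
  else 0

/-- `U_*(x) = ∫_0^x (1-s) f_*(s) ds + ∫_0^1 s f_*(s) ds`. -/
noncomputable def Ustar (N : ℕ) (x : ℝ) : ℝ :=
  (∫ s in (0:ℝ)..x, (1-s) * fstar N s) + ∫ s in (0:ℝ)..1, s * fstar N s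

noncomputable def cc (N : ℕ) : ℝ := 1/((N:ℝ)-1)

noncomputable def gfun (N : ℕ) (s : ℝ) : ℝ :=
  (N:ℝ) ^ (-(2:ℝ)/((N:ℝ)-1)) * (((N:ℝ)-s) ^ cc N * (1-s) ^ (-cc N))

noncomputable def Hfun (N : ℕ) (s : ℝ) : ℝ :=
  (N:ℝ) ^ (-(2:ℝ)/((N:ℝ)-1)) / (N:ℝ) *
    (((N:ℝ)-s) ^ cc N * ((1-s) ^ (-cc N - 1) - (1-s) ^ (-cc N)))

section aux
variable {N : ℕ}

lemma hn2 (hN : 2 ≤ N) : (2:ℝ) ≤ (N:ℝ) := by exact_mod_cast hN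
lemma hn1pos (hN : 2 ≤ N) : (0:ℝ) < (N:ℝ) - 1 := by have := hn2 (N := N) hN; linarith
lemma ha_lt_one (hN : 2 ≤ N) : (N:ℝ)/((N:ℝ)+1) < 1 := by
  have h : (0:ℝ) < (N:ℝ)+1 := by have := hn2 (N := N) hN; linarith
  rw [div_lt_one h]; linarith
lemma ht1pos (hN : 2 ≤ N) {s : ℝ} (hs : s ≤ (N:ℝ)/((N:ℝ)+1)) : 0 < 1 - s := by
  have := ha_lt_one (N := N) hN; linarith
lemma ht2pos (hN : 2 ≤ N) {s : ℝ} (hs : s ≤ (N:ℝ)/((N:ℝ)+1)) : 0 < (N:ℝ) - s := by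
  have h1 := ha_lt_one (N := N) hN; have h2 := hn2 (N := N) hN; linarith
lemma hcmul (hN : 2 ≤ N) : cc N * ((N:ℝ) - 1) = 1 := by
  have := hn1pos (N := N) hN; rw [cc]; field_simp

lemma fstar_eq (hN : 2 ≤ N) {s : ℝ} (hs : s ≤ (N:ℝ)/((N:ℝ)+1)) :
    fstar N s = (N:ℝ) ^ (-(2:ℝ)/((N:ℝ)-1)) *
      ((1-s) ^ (-cc N - 2) * ((N:ℝ)-s) ^ (cc N - 1)) := by
  have h1 := ht1pos (N := N) hN hs
  have h2 := ht2pos (N := N) hN hs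
  have hn1 := hn1pos (N := N) hN
  rw [fstar, if_pos hs]
  have e3 : (3:ℝ) - ((N:ℝ)-2)/((N:ℝ)-1) = -(-cc N - 2) := by
    rw [cc]; field_simp; ring
  have eb : ((N:ℝ)-2)/((N:ℝ)-1) = -(cc N - 1) := by
    rw [cc]; field_simp; ring
  rw [e3, eb, Real.rpow_neg h1.le, Real.rpow_neg h2.le]
  rw [div_eq_mul_inv, mul_inv, inv_inv, inv_inv]


lemma one_sub_mul_fstar (hN : 2 ≤ N) {s : ℝ} (hs : s ≤ (N:ℝ)/((N:ℝ)+1)) :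
    (1-s) * fstar N s = (N:ℝ) ^ (-(2:ℝ)/((N:ℝ)-1)) *
      ((1-s) ^ (-cc N - 1) * ((N:ℝ)-s) ^ (cc N - 1)) := by
  have h1 := ht1pos hN hs
  rw [fstar_eq hN hs]
  have e : (1-s) ^ (-cc N - 1) = (1-s) ^ (-cc N - 2) * (1-s) := by
    rw [← Real.rpow_add_one h1.ne']; congr 1; ring
  rw [e]; ring

lemma hasDerivAt_gfun (hN : 2 ≤ N) {s : ℝ} (hs : s ≤ (N:ℝ)/((N:ℝ)+1)) :
    HasDerivAt (gfun N) ((1-s) * fstar N s) s := by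
  have h1 := ht1pos hN hs
  have h2 := ht2pos hN hs
  have d2 : HasDerivAt (fun t : ℝ => (N:ℝ) - t) (-1) s := by
    simpa using (hasDerivAt_id s).const_sub (N:ℝ)
  have d1 : HasDerivAt (fun t : ℝ => 1 - t) (-1) s := by
    simpa using (hasDerivAt_id s).const_sub (1:ℝ)
  have dA : HasDerivAt (fun t : ℝ => ((N:ℝ)-t) ^ cc N)
      ((-1) * cc N * ((N:ℝ)-s) ^ (cc N - 1)) s :=
    d2.rpow_const (Or.inl h2.ne')
  have dB : HasDerivAt (fun t : ℝ => (1-t) ^ (-cc N))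
      ((-1) * (-cc N) * (1-s) ^ (-cc N - 1)) s :=
    d1.rpow_const (Or.inl h1.ne')
  have dAB := (dA.mul dB).const_mul ((N:ℝ) ^ (-(2:ℝ)/((N:ℝ)-1)))
  have hg : gfun N = fun t => (N:ℝ) ^ (-(2:ℝ)/((N:ℝ)-1)) *
      (((N:ℝ)-t) ^ cc N * (1-t) ^ (-cc N)) := rfl
  rw [hg]
  convert dAB using 1
  case e'_4 => rfl
  case e'_5 => rfl
  case e'_8 => rfl
  rw [one_sub_mul_fstar hN hs]
  have e1 : (1-s) ^ (-cc N) = (1-s) ^ (-cc N - 1) * (1-s) := by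
    rw [← Real.rpow_add_one h1.ne']; congr 1; ring
  have e2 : ((N:ℝ)-s) ^ cc N = ((N:ℝ)-s) ^ (cc N - 1) * ((N:ℝ)-s) := by
    rw [← Real.rpow_add_one h2.ne']; congr 1; ring
  rw [e1, e2]
  have hc := hcmul (N := N) hN
  linear_combination (-((N:ℝ) ^ (-(2:ℝ)/((N:ℝ)-1)) * (1-s) ^ (-cc N - 1) *
    ((N:ℝ)-s) ^ (cc N - 1))) * hc

lemma hasDerivAt_Hfun (hN : 2 ≤ N) {s : ℝ} (hs : s ≤ (N:ℝ)/((N:ℝ)+1)) :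
    HasDerivAt (Hfun N) (fstar N s) s := by
  have h1 := ht1pos hN hs
  have h2 := ht2pos hN hs
  have hn0 : (N:ℝ) ≠ 0 := by have := hn2 (N := N) hN; linarith
  have d2 : HasDerivAt (fun t : ℝ => (N:ℝ) - t) (-1) s := by
    simpa using (hasDerivAt_id s).const_sub (N:ℝ)
  have d1 : HasDerivAt (fun t : ℝ => 1 - t) (-1) s := by
    simpa using (hasDerivAt_id s).const_sub (1:ℝ)
  have dA : HasDerivAt (fun t : ℝ => ((N:ℝ)-t) ^ cc N)
      ((-1) * cc N * ((N:ℝ)-s) ^ (cc N - 1)) s :=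
    d2.rpow_const (Or.inl h2.ne')
  have dB : HasDerivAt (fun t : ℝ => (1-t) ^ (-cc N))
      ((-1) * (-cc N) * (1-s) ^ (-cc N - 1)) s :=
    d1.rpow_const (Or.inl h1.ne')
  have dC : HasDerivAt (fun t : ℝ => (1-t) ^ (-cc N - 1))
      ((-1) * (-cc N - 1) * (1-s) ^ (-cc N - 1 - 1)) s :=
    d1.rpow_const (Or.inl h1.ne')
  have dH := ((dA.mul (dC.sub dB)).const_mul
    ((N:ℝ) ^ (-(2:ℝ)/((N:ℝ)-1)) / (N:ℝ)))
  have hH : Hfun N = fun t => (N:ℝ) ^ (-(2:ℝ)/((N:ℝ)-1)) / (N:ℝ) *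
      (((N:ℝ)-t) ^ cc N * ((1-t) ^ (-cc N - 1) - (1-t) ^ (-cc N))) := rfl
  rw [hH]
  convert dH using 1
  case e'_4 => rfl
  case e'_5 => rfl
  case e'_8 => rfl
  rw [fstar_eq hN hs]
  have e0 : (1-s) ^ (-cc N - 1 - 1) = (1-s) ^ (-cc N - 2) := by
    congr 1; ring
  have e2 : (1-s) ^ (-cc N) = (1-s) ^ (-cc N - 1) * (1-s) := by
    rw [← Real.rpow_add_one h1.ne']; congr 1; ring
  have e1 : (1-s) ^ (-cc N - 1) = (1-s) ^ (-cc N - 2) * (1-s) := by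
    rw [← Real.rpow_add_one h1.ne']; congr 1; ring
  have e3 : ((N:ℝ)-s) ^ cc N = ((N:ℝ)-s) ^ (cc N - 1) * ((N:ℝ)-s) := by
    rw [← Real.rpow_add_one h2.ne']; congr 1; ring
  rw [Pi.sub_apply]
  rw [e0, e2, e1, e3]
  have hc := hcmul (N := N) hN
  field_simp
  linear_combination (-s) * hc

lemma hnpos (hN : 2 ≤ N) : (0:ℝ) < (N:ℝ) := by have := hn2 (N := N) hN; linarith
lemma ha_nonneg (hN : 2 ≤ N) : (0:ℝ) ≤ (N:ℝ)/((N:ℝ)+1) := by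
  have := hnpos (N := N) hN; positivity

lemma gfun_zero (hN : 2 ≤ N) : gfun N 0 = (N:ℝ) ^ (-cc N) := by
  have hn := hnpos (N := N) hN
  rw [gfun]
  simp only [sub_zero, Real.one_rpow, mul_one]
  rw [← Real.rpow_add hn]
  congr 1
  rw [cc]; ring

lemma one_sub_a (hN : 2 ≤ N) : 1 - (N:ℝ)/((N:ℝ)+1) = 1/((N:ℝ)+1) := by
  have hn := hnpos (N := N) hN
  have h : (N:ℝ)+1 ≠ 0 := by linarith
  field_simp
  ring

lemma n_sub_a (hN : 2 ≤ N) : (N:ℝ) - (N:ℝ)/((N:ℝ)+1) = (N:ℝ)^2/((N:ℝ)+1) := by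
  have hn := hnpos (N := N) hN
  have h : (N:ℝ)+1 ≠ 0 := by linarith
  field_simp; ring

lemma npow_two_rpow (hN : 2 ≤ N) : ((N:ℝ)^2) ^ cc N = (N:ℝ) ^ (2 * cc N) := by
  have hn := hnpos (N := N) hN
  rw [← Real.rpow_natCast (N:ℝ) 2, ← Real.rpow_mul hn.le]
  norm_num

lemma gfun_a (hN : 2 ≤ N) : gfun N ((N:ℝ)/((N:ℝ)+1)) = 1 := by
  have hn := hnpos (N := N) hN
  have hn1 : (0:ℝ) < (N:ℝ)+1 := by linarith
  rw [gfun, n_sub_a hN, one_sub_a hN]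
  have A : ((1:ℝ)/((N:ℝ)+1)) ^ (-cc N) = (((N:ℝ)+1) ^ cc N) := by
    rw [Real.rpow_neg (by positivity), one_div, Real.inv_rpow hn1.le, inv_inv]
  have B : ((N:ℝ)^2/((N:ℝ)+1)) ^ cc N = ((N:ℝ)^2) ^ cc N / (((N:ℝ)+1) ^ cc N) :=
    Real.div_rpow (sq_nonneg _) hn1.le (cc N)
  rw [A, B, npow_two_rpow hN]
  have hne : (((N:ℝ)+1) ^ cc N) ≠ 0 := (Real.rpow_pos_of_pos hn1 _).ne'
  rw [div_mul_cancel₀ _ hne, ← Real.rpow_add hn]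
  rw [show -(2:ℝ)/((N:ℝ)-1) + 2 * cc N = 0 by rw [cc]; ring, Real.rpow_zero]

lemma Hfun_zero : Hfun N 0 = 0 := by
  simp [Hfun, Real.one_rpow]

lemma Hfun_a (hN : 2 ≤ N) : Hfun N ((N:ℝ)/((N:ℝ)+1)) = 1 := by
  have hn := hnpos (N := N) hN
  have hn0 : (N:ℝ) ≠ 0 := hn.ne'
  have h1 := ht1pos (N := N) hN (le_refl ((N:ℝ)/((N:ℝ)+1)))
  have key : Hfun N ((N:ℝ)/((N:ℝ)+1)) = gfun N ((N:ℝ)/((N:ℝ)+1)) := by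
    rw [Hfun, gfun]
    rw [show -cc N - 1 = -cc N + (-1) by ring, Real.rpow_add h1, Real.rpow_neg_one]
    rw [one_sub_a hN, one_div, inv_inv]
    field_simp
    ring
  rw [key, gfun_a hN]

lemma contOn_fstar (hN : 2 ≤ N) :
    ContinuousOn (fstar N) (Set.Iic ((N:ℝ)/((N:ℝ)+1))) := by
  have hphi : ContinuousOn (fun s : ℝ => (N:ℝ) ^ (-(2:ℝ)/((N:ℝ)-1)) *
      ((1-s) ^ (-cc N - 2) * ((N:ℝ)-s) ^ (cc N - 1)))
      (Set.Iic ((N:ℝ)/((N:ℝ)+1))) := by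
    apply continuousOn_const.mul
    apply ContinuousOn.mul
    · exact ((continuous_const.sub continuous_id).continuousOn).rpow_const
        (fun t ht => Or.inl (ht1pos hN ht).ne')
    · exact ((continuous_const.sub continuous_id).continuousOn).rpow_const
        (fun t ht => Or.inl (ht2pos hN ht).ne')
  exact hphi.congr (fun t ht => fstar_eq hN ht)

lemma intervalIntegrable_mul_fstar (hN : 2 ≤ N) (w : ℝ → ℝ) (hw : Continuous w)
    {u v : ℝ} (hu : u ≤ (N:ℝ)/((N:ℝ)+1)) (hv : v ≤ (N:ℝ)/((N:ℝ)+1)) :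
    IntervalIntegrable (fun s => w s * fstar N s) volume u v := by
  have hsub : Set.uIcc u v ⊆ Set.Iic ((N:ℝ)/((N:ℝ)+1)) := by
    intro t ht
    rcases Set.mem_uIcc.mp ht with ⟨_, h⟩ | ⟨_, h⟩ <;> exact le_trans h (by assumption)
  exact ((hw.continuousOn).mul ((contOn_fstar hN).mono hsub)).intervalIntegrable

lemma integral_one_sub_mul (hN : 2 ≤ N) {x : ℝ} (hx0 : 0 ≤ x)
    (hxa : x ≤ (N:ℝ)/((N:ℝ)+1)) :
    ∫ s in (0:ℝ)..x, (1-s) * fstar N s = gfun N x - gfun N 0 := by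
  apply intervalIntegral.integral_eq_sub_of_hasDerivAt
  · intro t ht
    rw [Set.uIcc_of_le hx0] at ht
    exact hasDerivAt_gfun hN (le_trans ht.2 hxa)
  · exact intervalIntegrable_mul_fstar hN _ (continuous_const.sub continuous_id)
      (ha_nonneg hN) hxa

lemma integral_fstar (hN : 2 ≤ N) :
    ∫ s in (0:ℝ)..((N:ℝ)/((N:ℝ)+1)), fstar N s = 1 := by
  have h : ∫ s in (0:ℝ)..((N:ℝ)/((N:ℝ)+1)), fstar N s
      = Hfun N ((N:ℝ)/((N:ℝ)+1)) - Hfun N 0 := by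
    apply intervalIntegral.integral_eq_sub_of_hasDerivAt
    · intro t ht
      rw [Set.uIcc_of_le (ha_nonneg hN)] at ht
      exact hasDerivAt_Hfun hN ht.2
    · have := intervalIntegrable_mul_fstar hN (fun _ => (1:ℝ)) continuous_const
        (ha_nonneg hN) (le_refl ((N:ℝ)/((N:ℝ)+1)))
      simpa using this
  rw [h, Hfun_a hN, Hfun_zero]; norm_num

end aux

lemma integral_tail_zero (hN : 2 ≤ N) :
    ∫ s in ((N:ℝ)/((N:ℝ)+1))..1, s * fstar N s = 0 := by
  rw [intervalIntegral.integral_of_le (ha_lt_one hN).le]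
  have h : Set.EqOn (fun s => s * fstar N s) 0
      (Set.Ioc ((N:ℝ)/((N:ℝ)+1)) 1) := by
    intro t ht
    have : ¬ (t ≤ (N:ℝ)/((N:ℝ)+1)) := not_le.mpr ht.1
    simp [fstar, this]
  rw [MeasureTheory.setIntegral_congr_fun measurableSet_Ioc h]
  simp

lemma intervalIntegrable_tail (hN : 2 ≤ N) :
    IntervalIntegrable (fun s => s * fstar N s) volume ((N:ℝ)/((N:ℝ)+1)) 1 := by
  rw [intervalIntegrable_iff_integrableOn_Ioc_of_le (ha_lt_one hN).le]
  have h : Set.EqOn (fun s => s * fstar N s) 0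
      (Set.Ioc ((N:ℝ)/((N:ℝ)+1)) 1) := by
    intro t ht
    have : ¬ (t ≤ (N:ℝ)/((N:ℝ)+1)) := not_le.mpr ht.1
    simp [fstar, this]
  exact (integrableOn_congr_fun h measurableSet_Ioc).mpr (integrableOn_zero)

lemma integral_s_mul (hN : 2 ≤ N) :
    ∫ s in (0:ℝ)..1, s * fstar N s = (N:ℝ) ^ (-cc N) := by
  have int1 : IntervalIntegrable (fun s => s * fstar N s) volume 0 ((N:ℝ)/((N:ℝ)+1)) :=
    intervalIntegrable_mul_fstar hN _ continuous_id (ha_nonneg hN) le_rfl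
  have hsplit := intervalIntegral.integral_add_adjacent_intervals int1
    (intervalIntegrable_tail hN)
  rw [integral_tail_zero hN, add_zero] at hsplit
  rw [← hsplit]
  have hrw : ∀ s : ℝ, s * fstar N s = fstar N s - (1-s) * fstar N s := fun s => by ring
  simp_rw [hrw]
  rw [intervalIntegral.integral_sub]
  · rw [integral_fstar hN, integral_one_sub_mul hN (ha_nonneg hN) le_rfl,
      gfun_a hN, gfun_zero hN]
    ring
  · have := intervalIntegrable_mul_fstar hN (fun _ => (1:ℝ)) continuous_const
      (ha_nonneg hN) le_rfl
    simpa using this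
  · exact intervalIntegrable_mul_fstar hN _ (continuous_const.sub continuous_id)
      (ha_nonneg hN) le_rfl

theorem Ustar_closed_form' (N : ℕ) (hN : 2 ≤ N)
    (x : ℝ) (hx : x ∈ Set.Icc (0:ℝ) ((N:ℝ)/((N:ℝ)+1))) :
    Ustar N x = (((N:ℝ)-x)/((N:ℝ)^2 * (1-x))) ^ ((1:ℝ)/((N:ℝ)-1)) := by
  obtain ⟨hx0, hxa⟩ := hx
  have hn := hnpos (N := N) hN
  have h1 := ht1pos hN hxa
  have h2 := ht2pos hN hxa
  have hU : Ustar N x = gfun N x := by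
    rw [Ustar, integral_one_sub_mul hN hx0 hxa, integral_s_mul hN, gfun_zero hN]
    ring
  rw [hU]
  have hcc : (1:ℝ)/((N:ℝ)-1) = cc N := rfl
  rw [hcc]
  rw [Real.div_rpow h2.le (by positivity), Real.mul_rpow (sq_nonneg _) h1.le,
    npow_two_rpow hN]
  rw [gfun, Real.rpow_neg h1.le]
  have hD : (N:ℝ) ^ (-(2:ℝ)/((N:ℝ)-1)) = ((N:ℝ) ^ (2 * cc N))⁻¹ := by
    rw [← Real.rpow_neg hn.le]; congr 1; rw [cc]; ring
  rw [hD]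
  have ht1ne : ((1-x) ^ cc N) ≠ 0 := (Real.rpow_pos_of_pos h1 _).ne'
  have hnne : ((N:ℝ) ^ (2 * cc N)) ≠ 0 := (Real.rpow_pos_of_pos hn _).ne'
  field_simp

/-- for `N ≥ 2` and `x ∈ [0, N/(N+1)]`,
`U_*(x) = ((N-x)/(N² (1-x)))^{1/(N-1)}`. -/
theorem Ustar_closed_form (N : ℕ) (hN : 2 ≤ N)
    (x : ℝ) (hx : x ∈ Set.Icc (0:ℝ) ((N:ℝ)/((N:ℝ)+1))) :
    Ustar N x = (((N:ℝ)-x)/((N:ℝ)^2 * (1-x))) ^ ((1:ℝ)/((N:ℝ)-1)) := by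
  exact Ustar_closed_form' N hN x hx
end

section
/- For every integer N ≥ 2, the average elimination probability under the Nash equilibrium equals V_* = ∫_0^1 s f_*(s) ds = N^{-1/(N-1)}. -/
open Real MeasureTheory

/-- the average elimination probability under the Nash equilibrium:
`V_* = ∫_0^1 s f_*(s) ds = N^{-1/(N-1)}`. -/
theorem Vstar_closed_form (N : ℕ) (hN : 2 ≤ N) :
    ∫ s in (0:ℝ)..1, s * fstar N s = (N:ℝ) ^ (-(1:ℝ)/((N:ℝ)-1)) := by
  set n : ℝ := (N : ℝ) with hn_def
  have hn2 : (2:ℝ) ≤ n := by rw [hn_def]; exact_mod_cast hN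
  have hn0 : 0 < n := by linarith
  have hn1 : 0 < n - 1 := by linarith
  have hnp1 : 0 < n + 1 := by linarith
  set b : ℝ := (n-2)/(n-1) with hb_def
  set C : ℝ := n ^ (-(2:ℝ)/(n-1)) with hC_def
  set a : ℝ := n/(n+1) with ha_def
  have ha0 : 0 ≤ a := by positivity
  have ha1 : a < 1 := by rw [ha_def, div_lt_one hnp1]; linarith
  have han : a < n := by
    rw [ha_def, div_lt_iff₀ hnp1]; nlinarith
  have hpos : ∀ s ∈ Set.Icc (0:ℝ) a, 0 < 1 - s ∧ 0 < n - s := by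
    intro s hs
    exact ⟨by linarith [hs.2, ha1], by linarith [hs.2, han]⟩
  -- unfolding fstar on [0,a]
  have hfs : ∀ s : ℝ, s ≤ a → fstar N s = C / ((1-s) ^ ((3:ℝ)-b) * (n-s) ^ b) := by
    intro s hs
    unfold fstar
    rw [if_pos]
    exact hs
  have hfs0 : ∀ s : ℝ, a < s → fstar N s = 0 := by
    intro s hs
    unfold fstar
    rw [if_neg]
    exact not_le.mpr hs
  -- the explicit integrand on [0,a]
  set G : ℝ → ℝ := fun s => s * (C / ((1-s) ^ ((3:ℝ) - b) * (n-s) ^ b)) with hG_def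
  have hGcont : ContinuousOn G (Set.Icc (0:ℝ) a) := by
    have hA : ContinuousOn (fun s : ℝ => (1-s) ^ ((3:ℝ)-b)) (Set.Icc (0:ℝ) a) :=
      (continuousOn_const.sub continuousOn_id).rpow_const
        (fun s hs => Or.inl (ne_of_gt (hpos s hs).1))
    have hB : ContinuousOn (fun s : ℝ => (n-s) ^ b) (Set.Icc (0:ℝ) a) :=
      (continuousOn_const.sub continuousOn_id).rpow_const
        (fun s hs => Or.inl (ne_of_gt (hpos s hs).2))
    exact continuousOn_id.mul (continuousOn_const.div (hA.mul hB)
      (fun s hs => by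
        have h1 := (hpos s hs).1
        have h2 := (hpos s hs).2
        positivity))
  have hGint : IntervalIntegrable G volume 0 a := by
    apply ContinuousOn.intervalIntegrable
    rwa [Set.uIcc_of_le ha0]
  -- integrand equals G on [0,a]
  have hEq : Set.EqOn (fun s => s * fstar N s) G (Set.uIcc (0:ℝ) a) := by
    rw [Set.uIcc_of_le ha0]
    intro s hs
    simp only [hG_def]
    rw [hfs s hs.2]
  have hi1 : IntervalIntegrable (fun s => s * fstar N s) volume 0 a := by
    apply hGint.congr
    intro s hs
    exact (hEq (Set.uIoc_subset_uIcc hs)).symm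
  have hi2 : IntervalIntegrable (fun s => s * fstar N s) volume a 1 := by
    apply (intervalIntegrable_const (c := (0:ℝ))).congr
    intro s hs
    rw [Set.uIoc_of_le (le_of_lt ha1)] at hs
    show (0:ℝ) = s * fstar N s
    rw [hfs0 s hs.1, mul_zero]
  -- the tail integral vanishes
  have htail : ∫ s in a..(1:ℝ), s * fstar N s = 0 := by
    have h0 : ∫ s in a..(1:ℝ), s * fstar N s = ∫ _ in a..(1:ℝ), (0:ℝ) := by
      apply intervalIntegral.integral_congr_ae
      apply Filter.Eventually.of_forall
      intro s hs
      rw [Set.uIoc_of_le (le_of_lt ha1)] at hs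
      rw [hfs0 s hs.1, mul_zero]
    rw [h0, intervalIntegral.integral_zero]
  -- antiderivative
  set F : ℝ → ℝ := fun s => C * ((n+1)/n * s - 1) * ((1-s) ^ (b-2) * (n-s) ^ (1-b))
    with hF_def
  have hderiv : ∀ s ∈ Set.uIcc (0:ℝ) a, HasDerivAt F (G s) s := by
    rw [Set.uIcc_of_le ha0]
    intro s hs
    obtain ⟨h1s, hns⟩ := hpos s hs
    have h1 : HasDerivAt (fun s : ℝ => (1-s) ^ (b-2)) (-1 * (b-2) * (1-s)^(b-2-1)) s :=
      ((hasDerivAt_id s).const_sub 1).rpow_const (Or.inl (ne_of_gt h1s))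
    have h2 : HasDerivAt (fun s : ℝ => (n-s) ^ (1-b)) (-1 * (1-b) * (n-s)^(1-b-1)) s :=
      ((hasDerivAt_id s).const_sub n).rpow_const (Or.inl (ne_of_gt hns))
    have hg : HasDerivAt (fun s : ℝ => C * ((n+1)/n * s - 1)) (C * ((n+1)/n * 1)) s :=
      (((hasDerivAt_id s).const_mul ((n+1)/n)).sub_const 1).const_mul C
    have hF' := hg.mul (h1.mul h2)
    refine hF'.congr_deriv ?_
    symm
    have e1 : (1-s) ^ (b-2) = (1-s) ^ (b-2-1) * (1-s) := by
      rw [← Real.rpow_add_one (ne_of_gt h1s) (b-2-1)]; ring_nf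
    have e2 : (n-s) ^ (1-b) = (n-s) ^ (1-b-1) * (n-s) := by
      rw [← Real.rpow_add_one (ne_of_gt hns) (1-b-1)]; ring_nf
    have eL : C / ((1-s) ^ ((3:ℝ) - b) * (n-s) ^ b)
        = C * ((1-s) ^ (b-2-1) * (n-s) ^ (1-b-1)) := by
      rw [div_eq_iff (by
        have := h1s; have := hns; positivity)]
      have e3 : (1-s) ^ ((3:ℝ) - b) * (1-s) ^ (b-2-1) = 1 := by
        rw [← Real.rpow_add h1s, show (3:ℝ) - b + (b-2-1) = 0 by ring, Real.rpow_zero]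
      have e4 : (n-s) ^ b * (n-s) ^ (1-b-1) = 1 := by
        rw [← Real.rpow_add hns, show b + (1-b-1) = 0 by ring, Real.rpow_zero]
      calc C = C * (((1-s) ^ ((3:ℝ) - b) * (1-s) ^ (b-2-1))
            * ((n-s) ^ b * (n-s) ^ (1-b-1))) := by rw [e3, e4]; ring
        _ = _ := by ring
    have key : (n+1)/n * (1-s) * (n-s)
        + ((n+1)/n * s - 1) * (-(b-2)*(n-s) - (1-b)*(1-s)) = s := by
      rw [hb_def]
      field_simp
      ring
    rw [hG_def]
    simp only [eL, e1, e2, Pi.mul_apply]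
    linear_combination (-(C * ((1-s) ^ (b-2-1) * (n-s) ^ (1-b-1)))) * key
  -- FTC
  have hmain : ∫ s in (0:ℝ)..a, s * fstar N s = F a - F 0 := by
    rw [intervalIntegral.integral_congr hEq]
    exact intervalIntegral.integral_eq_sub_of_hasDerivAt hderiv hGint
  have hFa : F a = 0 := by
    rw [hF_def]
    have : (n+1)/n * a - 1 = 0 := by
      rw [ha_def]; field_simp; ring
    simp [this]
  have hF0 : F 0 = -(C * n ^ ((1:ℝ)/(n-1))) := by
    have h1b : (1:ℝ) - b = 1/(n-1) := by rw [hb_def]; field_simp; ring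
    show C * ((n+1)/n * 0 - 1) * ((1-0) ^ (b-2) * (n-0) ^ (1-b)) = _
    rw [h1b]
    norm_num [Real.one_rpow]
  rw [← intervalIntegral.integral_add_adjacent_intervals hi1 hi2, htail, add_zero,
    hmain, hFa, hF0]
  rw [hC_def, ← Real.rpow_add hn0]
  rw [show -(2:ℝ)/(n-1) + 1/(n-1) = -(1:ℝ)/(n-1) by ring]
  ring
end

section
/- For every integer N ≥ 2 and every x ∈ (N/(N+1), 1], the expected winning probability of a player choosing x against N-1 opponents playing f_* satisfies (1-x) · U_*(x)^{N-1} + (x/N) · V_*^{N-1} = 1 - (1 - 1/N^2) x, and this quantity is strictly less than 1/N. -/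
open Real MeasureTheory

/-- `V_* = ∫_0^1 s f_*(s) ds`. -/
noncomputable def Vstar (N : ℕ) : ℝ := ∫ s in (0:ℝ)..1, s * fstar N s

namespace LosingAux

noncomputable def pp (N : ℕ) : ℝ := 1/((N:ℝ)-1)
noncomputable def CC (N : ℕ) : ℝ := (N:ℝ) ^ (-(2:ℝ)/((N:ℝ)-1))
noncomputable def G (N : ℕ) (s : ℝ) : ℝ :=
  CC N * (((N:ℝ)-s) ^ (pp N) * (1-s) ^ (-(pp N)))
noncomputable def F (N : ℕ) (s : ℝ) : ℝ :=
  CC N / (N:ℝ) * (s * (((N:ℝ)-s) ^ (pp N) * (1-s) ^ (-(pp N)-1)))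

variable {N : ℕ}

lemma hn2 (hN : 2 ≤ N) : (2:ℝ) ≤ (N:ℝ) := by exact_mod_cast hN

lemma hp_mul (hN : 2 ≤ N) : pp N * ((N:ℝ)-1) = 1 := by
  have h := hn2 hN
  have h1 : (N:ℝ) - 1 ≠ 0 := by linarith
  unfold pp; field_simp

lemma hasDerivAt_G (hN : 2 ≤ N) {s : ℝ} (hs : s < 1) :
    HasDerivAt (G N) (CC N * (((N:ℝ)-s) ^ (pp N - 1) * (1-s) ^ (-(pp N) - 1))) s := by
  have hn := hn2 hN
  have hns : 0 < (N:ℝ) - s := by linarith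
  have h1s : 0 < 1 - s := by linarith
  have h1 : HasDerivAt (fun t : ℝ => ((N:ℝ)-t) ^ (pp N))
      (-1 * pp N * ((N:ℝ)-s) ^ (pp N - 1)) s := by
    have := ((hasDerivAt_id s).const_sub (N:ℝ)).rpow_const (p := pp N) (Or.inl hns.ne')
    simpa using this
  have h2 : HasDerivAt (fun t : ℝ => (1-t) ^ (-(pp N)))
      (-1 * (-(pp N)) * (1-s) ^ (-(pp N) - 1)) s := by
    have := ((hasDerivAt_id s).const_sub (1:ℝ)).rpow_const (p := -(pp N)) (Or.inl h1s.ne')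
    simpa using this
  have hmain := (h1.mul h2).const_mul (CC N)
  convert hmain using 1
  · rfl
  · rfl
  · rfl
  have e1 : ((N:ℝ)-s) ^ (pp N) = ((N:ℝ)-s) ^ (pp N - 1) * ((N:ℝ)-s) := by
    rw [← Real.rpow_add_one hns.ne' (pp N - 1)]
    ring_nf
  have e2 : (1-s) ^ (-(pp N)) = (1-s) ^ (-(pp N) - 1) * (1-s) := by
    rw [← Real.rpow_add_one h1s.ne' (-(pp N) - 1)]
    ring_nf
  rw [e1, e2]
  have hp := hp_mul hN
  linear_combination (-(CC N * (((N:ℝ)-s) ^ (pp N - 1) * (1-s) ^ (-(pp N) - 1)))) * hp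

lemma hasDerivAt_F (hN : 2 ≤ N) {s : ℝ} (hs : s < 1) :
    HasDerivAt (F N) (CC N * (((N:ℝ)-s) ^ (pp N - 1) * (1-s) ^ (-(pp N) - 2))) s := by
  have hn := hn2 hN
  have hn0 : (0:ℝ) < (N:ℝ) := by linarith
  have hns : 0 < (N:ℝ) - s := by linarith
  have h1s : 0 < 1 - s := by linarith
  have h1 : HasDerivAt (fun t : ℝ => ((N:ℝ)-t) ^ (pp N))
      (-1 * pp N * ((N:ℝ)-s) ^ (pp N - 1)) s := by
    have := ((hasDerivAt_id s).const_sub (N:ℝ)).rpow_const (p := pp N) (Or.inl hns.ne')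
    simpa using this
  have h2 : HasDerivAt (fun t : ℝ => (1-t) ^ (-(pp N)-1))
      (-1 * (-(pp N)-1) * (1-s) ^ (-(pp N) - 1 - 1)) s := by
    have := ((hasDerivAt_id s).const_sub (1:ℝ)).rpow_const (p := -(pp N)-1) (Or.inl h1s.ne')
    simpa using this
  have hmain := (((hasDerivAt_id s).mul (h1.mul h2)).const_mul (CC N / (N:ℝ)))
  convert hmain using 1
  · rfl
  · rfl
  · rfl
  have e1 : ((N:ℝ)-s) ^ (pp N) = ((N:ℝ)-s) ^ (pp N - 1) * ((N:ℝ)-s) := by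
    rw [← Real.rpow_add_one hns.ne' (pp N - 1)]
    ring_nf
  have e2 : (1-s) ^ (-(pp N)-1) = (1-s) ^ (-(pp N) - 2) * (1-s) := by
    rw [← Real.rpow_add_one h1s.ne' (-(pp N) - 2)]
    ring_nf
  have e3 : (1-s) ^ (-(pp N) - 1 - 1) = (1-s) ^ (-(pp N) - 2) := by
    rw [show (-(pp N) - 1 - 1 : ℝ) = -(pp N) - 2 by ring]
  simp only [Pi.mul_apply, id]
  rw [e1, e2, e3]
  have hp := hp_mul hN
  have hNne : (N:ℝ) ≠ 0 := by linarith
  field_simp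
  linear_combination (-(CC N * s)) * hp

lemma fstar_eq (hN : 2 ≤ N) {s : ℝ} (hs : s ≤ (N:ℝ)/((N:ℝ)+1)) :
    fstar N s = CC N * (((N:ℝ)-s) ^ (pp N - 1) * (1-s) ^ (-(pp N) - 2)) := by
  have hn := hn2 hN
  have ha1 : (N:ℝ)/((N:ℝ)+1) < 1 := by
    rw [div_lt_one (by linarith)]; linarith
  have h1s : 0 < 1 - s := by linarith
  have hns : 0 < (N:ℝ) - s := by linarith
  have h1 : (N:ℝ) - 1 ≠ 0 := by linarith
  have hb1 : ((3:ℝ) - ((N:ℝ)-2)/((N:ℝ)-1)) = pp N + 2 := by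
    unfold pp; field_simp; ring
  have hb2 : (((N:ℝ)-2)/((N:ℝ)-1)) = 1 - pp N := by
    unfold pp; field_simp; ring
  rw [fstar, if_pos hs, hb1, hb2]
  rw [show pp N - 1 = -(1 - pp N) by ring, show -(pp N) - 2 = -(pp N + 2) by ring,
    Real.rpow_neg hns.le, Real.rpow_neg h1s.le]
  rw [CC, div_eq_mul_inv, mul_inv]
  ring

lemma aN_lt_one (hN : 2 ≤ N) : (N:ℝ)/((N:ℝ)+1) < 1 := by
  have hn := hn2 hN
  rw [div_lt_one (by linarith)]; linarith

lemma aN_nonneg (hN : 2 ≤ N) : 0 ≤ (N:ℝ)/((N:ℝ)+1) := by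
  have hn := hn2 hN
  positivity

lemma int1 (hN : 2 ≤ N) :
    ∫ s in (0:ℝ)..((N:ℝ)/((N:ℝ)+1)), (1-s) * fstar N s
      = G N ((N:ℝ)/((N:ℝ)+1)) - G N 0 := by
  have hn := hn2 hN
  have ha0 := aN_nonneg hN
  have ha1 := aN_lt_one hN
  have huicc : Set.uIcc (0:ℝ) ((N:ℝ)/((N:ℝ)+1)) = Set.Icc 0 ((N:ℝ)/((N:ℝ)+1)) :=
    Set.uIcc_of_le ha0
  have hEq : Set.EqOn (fun s => (1-s) * fstar N s)
      (fun s => CC N * (((N:ℝ)-s) ^ (pp N - 1) * (1-s) ^ (-(pp N) - 1)))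
      (Set.uIcc (0:ℝ) ((N:ℝ)/((N:ℝ)+1))) := by
    intro t ht
    rw [huicc] at ht
    have ht1 : t < 1 := lt_of_le_of_lt ht.2 ha1
    have h1t : 0 < 1 - t := by linarith
    simp only
    rw [fstar_eq hN ht.2]
    rw [show -(pp N) - 1 = (-(pp N) - 2) + 1 by ring, Real.rpow_add_one h1t.ne']
    ring
  rw [intervalIntegral.integral_congr hEq]
  apply intervalIntegral.integral_eq_sub_of_hasDerivAt
  · intro t ht
    rw [huicc] at ht
    exact hasDerivAt_G hN (lt_of_le_of_lt ht.2 ha1)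
  · apply ContinuousOn.intervalIntegrable
    apply ContinuousOn.mul continuousOn_const
    apply ContinuousOn.mul
    · apply ContinuousOn.rpow_const (Continuous.continuousOn (by continuity))
      intro t ht
      rw [huicc] at ht
      left; have : t < 1 := lt_of_le_of_lt ht.2 ha1
      intro h; nlinarith [sub_eq_zero.mp h]
    · apply ContinuousOn.rpow_const (Continuous.continuousOn (by continuity))
      intro t ht
      rw [huicc] at ht
      left; have : t < 1 := lt_of_le_of_lt ht.2 ha1
      intro h; nlinarith [sub_eq_zero.mp h]

lemma int2 (hN : 2 ≤ N) :
    ∫ s in (0:ℝ)..((N:ℝ)/((N:ℝ)+1)), s * fstar N s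
      = (F N ((N:ℝ)/((N:ℝ)+1)) - G N ((N:ℝ)/((N:ℝ)+1))) - (F N 0 - G N 0) := by
  have hn := hn2 hN
  have ha0 := aN_nonneg hN
  have ha1 := aN_lt_one hN
  have huicc : Set.uIcc (0:ℝ) ((N:ℝ)/((N:ℝ)+1)) = Set.Icc 0 ((N:ℝ)/((N:ℝ)+1)) :=
    Set.uIcc_of_le ha0
  have hEq : Set.EqOn (fun s => s * fstar N s)
      (fun s => CC N * (((N:ℝ)-s) ^ (pp N - 1) * (1-s) ^ (-(pp N) - 2))
        - CC N * (((N:ℝ)-s) ^ (pp N - 1) * (1-s) ^ (-(pp N) - 1)))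
      (Set.uIcc (0:ℝ) ((N:ℝ)/((N:ℝ)+1))) := by
    intro t ht
    rw [huicc] at ht
    have ht1 : t < 1 := lt_of_le_of_lt ht.2 ha1
    have h1t : 0 < 1 - t := by linarith
    simp only
    rw [fstar_eq hN ht.2]
    rw [show -(pp N) - 1 = (-(pp N) - 2) + 1 by ring, Real.rpow_add_one h1t.ne']
    ring
  rw [intervalIntegral.integral_congr hEq]
  apply intervalIntegral.integral_eq_sub_of_hasDerivAt (f := fun t => F N t - G N t)
  · intro t ht
    rw [huicc] at ht
    exact (hasDerivAt_F hN (lt_of_le_of_lt ht.2 ha1)).sub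
      (hasDerivAt_G hN (lt_of_le_of_lt ht.2 ha1))
  · apply ContinuousOn.intervalIntegrable
    apply ContinuousOn.sub
    all_goals {
      apply ContinuousOn.mul continuousOn_const
      apply ContinuousOn.mul
      · apply ContinuousOn.rpow_const (Continuous.continuousOn (by continuity))
        intro t ht
        rw [huicc] at ht
        left; have : t < 1 := lt_of_le_of_lt ht.2 ha1
        intro h; nlinarith [sub_eq_zero.mp h]
      · apply ContinuousOn.rpow_const (Continuous.continuousOn (by continuity))
        intro t ht
        rw [huicc] at ht
        left; have : t < 1 := lt_of_le_of_lt ht.2 ha1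
        intro h; nlinarith [sub_eq_zero.mp h] }

lemma key1 (hN : 2 ≤ N) : CC N * (((N:ℝ)^2) ^ (pp N)) = 1 := by
  have hn := hn2 hN
  have hn0 : (0:ℝ) < (N:ℝ) := by linarith
  have e : ((N:ℝ)^2) ^ (pp N) = (N:ℝ) ^ ((2:ℝ) * pp N) := by
    rw [← Real.rpow_natCast (N:ℝ) 2, ← Real.rpow_mul hn0.le]
    norm_num
  rw [CC, e, ← Real.rpow_add hn0]
  rw [show -(2:ℝ)/((N:ℝ)-1) + 2 * pp N = 0 by
    have h1 : (N:ℝ) - 1 ≠ 0 := by linarith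
    unfold pp; field_simp; ring]
  exact Real.rpow_zero _

lemma G_zero (hN : 2 ≤ N) : G N 0 = (N:ℝ) ^ (-(pp N)) := by
  have hn := hn2 hN
  have hn0 : (0:ℝ) < (N:ℝ) := by linarith
  rw [G, CC]
  norm_num
  rw [← Real.rpow_add hn0]
  congr 1
  unfold pp; field_simp; ring

lemma G_aN (hN : 2 ≤ N) : G N ((N:ℝ)/((N:ℝ)+1)) = 1 := by
  have hn := hn2 hN
  have hn0 : (0:ℝ) < (N:ℝ) := by linarith
  have hn1 : (0:ℝ) < (N:ℝ)+1 := by linarith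
  have h1a : 0 < 1 - (N:ℝ)/((N:ℝ)+1) := by linarith [aN_lt_one hN]
  have hna : 0 < (N:ℝ) - (N:ℝ)/((N:ℝ)+1) := by
    have := aN_lt_one hN; linarith
  rw [G, Real.rpow_neg h1a.le, mul_comm (((N:ℝ)-(N:ℝ)/((N:ℝ)+1)) ^ pp N),
    ← div_eq_inv_mul, ← Real.div_rpow hna.le h1a.le]
  rw [show ((N:ℝ) - (N:ℝ)/((N:ℝ)+1)) / (1 - (N:ℝ)/((N:ℝ)+1)) = (N:ℝ)^2 by
    field_simp; ring]
  exact key1 hN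

lemma F_zero : F N 0 = 0 := by simp [F]

lemma F_aN (hN : 2 ≤ N) : F N ((N:ℝ)/((N:ℝ)+1)) = 1 := by
  have hn := hn2 hN
  have hn0 : (0:ℝ) < (N:ℝ) := by linarith
  have hn1 : (0:ℝ) < (N:ℝ)+1 := by linarith
  have h1a : 0 < 1 - (N:ℝ)/((N:ℝ)+1) := by linarith [aN_lt_one hN]
  have hna : 0 < (N:ℝ) - (N:ℝ)/((N:ℝ)+1) := by
    have := aN_lt_one hN; linarith
  have e : (1 - (N:ℝ)/((N:ℝ)+1)) ^ (-(pp N) - 1)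
      = (1 - (N:ℝ)/((N:ℝ)+1)) ^ (-(pp N)) * (1 - (N:ℝ)/((N:ℝ)+1))⁻¹ := by
    rw [show -(pp N) - 1 = -(pp N) + (-1) by ring, Real.rpow_add h1a,
      Real.rpow_neg_one]
  rw [F, e]
  have hG := G_aN hN
  rw [G] at hG
  have harith : (N:ℝ)/((N:ℝ)+1) * (1 - (N:ℝ)/((N:ℝ)+1))⁻¹ = (N:ℝ) := by
    rw [show (1 - (N:ℝ)/((N:ℝ)+1)) = 1/((N:ℝ)+1) by field_simp; ring]
    field_simp
  calc CC N / (N:ℝ) * ((N:ℝ)/((N:ℝ)+1) *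
        (((N:ℝ)-(N:ℝ)/((N:ℝ)+1)) ^ pp N *
          ((1 - (N:ℝ)/((N:ℝ)+1)) ^ (-(pp N)) * (1 - (N:ℝ)/((N:ℝ)+1))⁻¹)))
      = ((N:ℝ)/((N:ℝ)+1) * (1 - (N:ℝ)/((N:ℝ)+1))⁻¹) / (N:ℝ) *
        (CC N * (((N:ℝ)-(N:ℝ)/((N:ℝ)+1)) ^ pp N * (1 - (N:ℝ)/((N:ℝ)+1)) ^ (-(pp N)))) := by
        ring
    _ = 1 := by rw [harith, hG]; field_simp

lemma tail_zero (hN : 2 ≤ N) (g : ℝ → ℝ) {c d : ℝ}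
    (hc : (N:ℝ)/((N:ℝ)+1) ≤ c) (hcd : c ≤ d) :
    ∫ s in c..d, g s * fstar N s = 0 := by
  rw [intervalIntegral.integral_of_le hcd]
  rw [MeasureTheory.setIntegral_congr_fun measurableSet_Ioc
    (g := fun _ => (0:ℝ)) (fun s hs => by
      have : ¬ s ≤ (N:ℝ)/((N:ℝ)+1) := not_le.2 (lt_of_le_of_lt hc hs.1)
      simp [fstar, this])]
  simp

lemma tail_integrable (hN : 2 ≤ N) (g : ℝ → ℝ) {c d : ℝ}
    (hc : (N:ℝ)/((N:ℝ)+1) ≤ c) (hcd : c ≤ d) :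
    IntervalIntegrable (fun s => g s * fstar N s) volume c d := by
  rw [intervalIntegrable_iff_integrableOn_Ioc_of_le hcd]
  apply MeasureTheory.IntegrableOn.congr_fun (f := fun _ => (0:ℝ))
  · exact integrableOn_zero
  · intro s hs
    have : ¬ s ≤ (N:ℝ)/((N:ℝ)+1) := not_le.2 (lt_of_le_of_lt hc hs.1)
    simp [fstar, this]
  · exact measurableSet_Ioc

lemma head_integrable1 (hN : 2 ≤ N) :
    IntervalIntegrable (fun s => (1-s) * fstar N s) volume 0 ((N:ℝ)/((N:ℝ)+1)) := by
  have ha0 := aN_nonneg hN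
  have ha1 := aN_lt_one hN
  have hn := hn2 hN
  have huicc : Set.uIcc (0:ℝ) ((N:ℝ)/((N:ℝ)+1)) = Set.Icc 0 ((N:ℝ)/((N:ℝ)+1)) :=
    Set.uIcc_of_le ha0
  apply ContinuousOn.intervalIntegrable
  apply ContinuousOn.congr (f := fun s => CC N * (((N:ℝ)-s) ^ (pp N - 1) * (1-s) ^ (-(pp N) - 1)))
  · apply ContinuousOn.mul continuousOn_const
    apply ContinuousOn.mul
    · apply ContinuousOn.rpow_const (Continuous.continuousOn (by continuity))
      intro t ht
      rw [huicc] at ht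
      left; have : t < 1 := lt_of_le_of_lt ht.2 ha1
      intro h; nlinarith [sub_eq_zero.mp h]
    · apply ContinuousOn.rpow_const (Continuous.continuousOn (by continuity))
      intro t ht
      rw [huicc] at ht
      left; have : t < 1 := lt_of_le_of_lt ht.2 ha1
      intro h; nlinarith [sub_eq_zero.mp h]
  · intro t ht
    rw [huicc] at ht
    have ht1 : t < 1 := lt_of_le_of_lt ht.2 ha1
    have h1t : 0 < 1 - t := by linarith
    simp only
    rw [fstar_eq hN ht.2]
    rw [show -(pp N) - 1 = (-(pp N) - 2) + 1 by ring, Real.rpow_add_one h1t.ne']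
    ring

lemma head_integrable2 (hN : 2 ≤ N) :
    IntervalIntegrable (fun s => s * fstar N s) volume 0 ((N:ℝ)/((N:ℝ)+1)) := by
  have ha0 := aN_nonneg hN
  have ha1 := aN_lt_one hN
  have hn := hn2 hN
  have huicc : Set.uIcc (0:ℝ) ((N:ℝ)/((N:ℝ)+1)) = Set.Icc 0 ((N:ℝ)/((N:ℝ)+1)) :=
    Set.uIcc_of_le ha0
  apply ContinuousOn.intervalIntegrable
  apply ContinuousOn.congr (f := fun s => CC N * (s * (((N:ℝ)-s) ^ (pp N - 1) * (1-s) ^ (-(pp N) - 2))))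
  · apply ContinuousOn.mul continuousOn_const
    apply ContinuousOn.mul (continuous_id.continuousOn)
    apply ContinuousOn.mul
    · apply ContinuousOn.rpow_const (Continuous.continuousOn (by continuity))
      intro t ht
      rw [huicc] at ht
      left; have : t < 1 := lt_of_le_of_lt ht.2 ha1
      intro h; nlinarith [sub_eq_zero.mp h]
    · apply ContinuousOn.rpow_const (Continuous.continuousOn (by continuity))
      intro t ht
      rw [huicc] at ht
      left; have : t < 1 := lt_of_le_of_lt ht.2 ha1
      intro h; nlinarith [sub_eq_zero.mp h]
  · intro t ht
    rw [huicc] at ht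
    simp only
    rw [fstar_eq hN ht.2]
    ring

lemma Vstar_eq (hN : 2 ≤ N) : Vstar N = (N:ℝ) ^ (-(pp N)) := by
  have ha1 := aN_lt_one hN
  rw [Vstar, ← intervalIntegral.integral_add_adjacent_intervals
      (b := (N:ℝ)/((N:ℝ)+1)) (head_integrable2 hN)
      (tail_integrable hN _ le_rfl ha1.le)]
  rw [int2 hN, tail_zero hN _ le_rfl ha1.le, F_aN hN, G_aN hN, F_zero, G_zero hN]
  ring

lemma Ustar_eq (hN : 2 ≤ N) {x : ℝ} (hxa : (N:ℝ)/((N:ℝ)+1) ≤ x) (hx1 : x ≤ 1) :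
    Ustar N x = 1 := by
  have hV := Vstar_eq hN
  rw [Vstar] at hV
  rw [Ustar, hV, ← intervalIntegral.integral_add_adjacent_intervals
      (b := (N:ℝ)/((N:ℝ)+1)) (head_integrable1 hN)
      (tail_integrable hN _ le_rfl hxa)]
  rw [int1 hN, tail_zero hN _ le_rfl hxa, G_aN hN, G_zero hN]
  ring

end LosingAux

open LosingAux in
/-- for `N ≥ 2` and `x ∈ (N/(N+1), 1]`, the expected winning
probability of a deviator equals `1 - (1 - 1/N²) x`, which is strictly
less than `1/N`. -/
theorem losing_above_support (N : ℕ) (hN : 2 ≤ N)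
    (x : ℝ) (hx : x ∈ Set.Ioc ((N:ℝ)/((N:ℝ)+1)) 1) :
    (1-x) * (Ustar N x) ^ (N-1) + (x/(N:ℝ)) * (Vstar N) ^ (N-1)
      = 1 - (1 - 1/(N:ℝ)^2) * x ∧
    (1-x) * (Ustar N x) ^ (N-1) + (x/(N:ℝ)) * (Vstar N) ^ (N-1) < 1/(N:ℝ) := by
  have hn : (2:ℝ) ≤ (N:ℝ) := by exact_mod_cast hN
  have hn0 : (0:ℝ) < (N:ℝ) := by linarith
  have hU : Ustar N x = 1 := Ustar_eq hN hx.1.le hx.2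
  have hV : Vstar N = (N:ℝ) ^ (-(pp N)) := Vstar_eq hN
  have hVpow : (Vstar N) ^ (N-1) = 1/(N:ℝ) := by
    rw [hV, ← Real.rpow_natCast ((N:ℝ) ^ (-(pp N))) (N-1), ← Real.rpow_mul hn0.le]
    have hc : ((N-1 : ℕ) : ℝ) = (N:ℝ) - 1 := by
      rw [Nat.cast_sub (by omega)]; norm_num
    rw [hc, show -(pp N) * ((N:ℝ)-1) = -1 by
      have := hp_mul (N := N) hN; linarith]
    rw [Real.rpow_neg_one, one_div]
  have hmain : (1-x) * (Ustar N x) ^ (N-1) + (x/(N:ℝ)) * (Vstar N) ^ (N-1)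
      = 1 - (1 - 1/(N:ℝ)^2) * x := by
    rw [hU, hVpow, one_pow]
    field_simp
    ring
  refine ⟨hmain, ?_⟩
  rw [hmain]
  have hxa : (N:ℝ)/((N:ℝ)+1) < x := hx.1
  have h2 : (N:ℝ) < x * ((N:ℝ)+1) := by
    rw [div_lt_iff₀ (by linarith)] at hxa
    linarith
  have key : 1 - 1/(N:ℝ) < (1 - 1/(N:ℝ)^2) * x := by
    have e : (1 - 1/(N:ℝ)^2) * x - (1 - 1/(N:ℝ))
        = ((N:ℝ)-1) * (x * ((N:ℝ)+1) - (N:ℝ)) / (N:ℝ)^2 := by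
      field_simp
      ring
    have hpos : 0 < ((N:ℝ)-1) * (x * ((N:ℝ)+1) - (N:ℝ)) / (N:ℝ)^2 := by
      apply div_pos
      · apply mul_pos (by linarith) (by linarith)
      · positivity
    linarith
  linarith
end

section
/- For every integer N ≥ 2, the function P̄(x) = (1-x) · U_*(x)^{N-1} + (x/N) · V_*^{N-1} satisfies P̄(x) ≤ 1/N for all x ∈ [0,1], with equality if and only if x ∈ [0, N/(N+1)]; hence f_* is a symmetric mixed-strategy Nash equilibrium of the N-player elimination game. -/
open Real MeasureTheory

set_option linter.unusedSectionVars false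

namespace NashAux

variable (N : ℕ)

noncomputable def pp : ℝ := 1/((N:ℝ)-1)
noncomputable def bb : ℝ := ((N:ℝ)-2)/((N:ℝ)-1)
noncomputable def cc : ℝ := (N:ℝ) ^ (-(2:ℝ)/((N:ℝ)-1))
noncomputable def qq (s : ℝ) : ℝ := ((N:ℝ)-s)/(1-s)
noncomputable def aa : ℝ := (N:ℝ)/((N:ℝ)+1)

variable {N} (hN : 2 ≤ N)
include hN

lemma hn2 : (2:ℝ) ≤ (N:ℝ) := by exact_mod_cast hN
lemma hn1 : (1:ℝ) < (N:ℝ) := by have := hn2 hN; linarith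
lemma hn0 : (0:ℝ) < (N:ℝ) := by have := hn1 hN; linarith
lemma hnm1 : (0:ℝ) < (N:ℝ) - 1 := by have := hn1 hN; linarith
lemma haa1 : aa N < 1 := by
  have h := hn0 hN
  rw [aa, div_lt_one (by linarith)]; linarith
lemma haa0 : 0 ≤ aa N := by
  have h := hn0 hN
  exact div_nonneg h.le (by linarith)

lemma hp_mul : pp N * ((N:ℝ)-1) = 1 := by
  have := hnm1 hN; rw [pp]; field_simp
lemma hpb : pp N - 1 = -bb N := by
  have := hnm1 hN
  rw [pp, bb]; field_simp; ring

lemma fstar_eq {s : ℝ} (hs : s ≤ aa N) :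
    fstar N s = cc N / ((1-s) ^ ((3:ℝ) - bb N) * ((N:ℝ)-s) ^ (bb N)) := by
  rw [aa] at hs; rw [fstar, if_pos hs]; rfl

lemma fstar_zero {s : ℝ} (hs : aa N < s) : fstar N s = 0 := by
  rw [aa] at hs; rw [fstar, if_neg (not_le.mpr hs)]


lemma hB' {s : ℝ} (hs : s < 1) : 0 < (N:ℝ) - s := by have := hn1 hN; linarith

lemma hq_pos {s : ℝ} (hs : s < 1) : 0 < qq N s :=
  div_pos (hB' hN hs) (by linarith)

lemma hasDerivAt_qq {s : ℝ} (hs : s < 1) :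
    HasDerivAt (qq N) (((N:ℝ)-1)/(1-s)^2) s := by
  have h1 : HasDerivAt (fun t : ℝ => (N:ℝ) - t) (-1) s := (hasDerivAt_id s).const_sub (N:ℝ)
  have h2 : HasDerivAt (fun t : ℝ => 1 - t) (-1) s := (hasDerivAt_id s).const_sub 1
  have := h1.div h2 (by linarith : (1:ℝ) - s ≠ 0)
  refine this.congr_deriv ?_
  field_simp
  ring

lemma hasDerivAt_qp {s : ℝ} (hs : s < 1) :
    HasDerivAt (fun t => qq N t ^ pp N)
      (pp N * qq N s ^ (pp N - 1) * (((N:ℝ)-1)/(1-s)^2)) s := by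
  exact (Real.hasDerivAt_rpow_const (Or.inl (ne_of_gt (hq_pos hN hs)))).comp s
    (hasDerivAt_qq hN hs)

lemma qp_eq {s : ℝ} (hs : s < 1) :
    qq N s ^ (pp N - 1) = (1-s)^(bb N) / ((N:ℝ)-s)^(bb N) := by
  have hA : (0:ℝ) < 1 - s := by linarith
  rw [hpb hN, rpow_neg (hq_pos hN hs).le, qq, div_rpow (hB' hN hs).le hA.le, inv_div]

lemma A3_eq {s : ℝ} (hs : s < 1) :
    (1-s) ^ ((3:ℝ) - bb N) = (1-s)^(3:ℕ) / (1-s)^(bb N) := by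
  have hA : (0:ℝ) < 1 - s := by linarith
  rw [rpow_sub hA, show ((3:ℝ)) = ((3:ℕ):ℝ) by norm_num, rpow_natCast]

lemma hasDerivAt_G {s : ℝ} (hs : s ≤ aa N) :
    HasDerivAt (fun t => cc N * qq N t ^ pp N) ((1-s) * fstar N s) s := by
  have hs1 : s < 1 := lt_of_le_of_lt hs (haa1 hN)
  have hA : (0:ℝ) < 1 - s := by linarith
  have hB := hB' hN hs1
  have hAb : (0:ℝ) < (1-s)^(bb N) := rpow_pos_of_pos hA _
  have hBb : (0:ℝ) < ((N:ℝ)-s)^(bb N) := rpow_pos_of_pos hB _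
  have := (hasDerivAt_qp hN hs1).const_mul (cc N)
  refine this.congr_deriv ?_
  rw [fstar_eq hN hs, qp_eq hN hs1,
    show pp N * ((1-s)^(bb N)/((N:ℝ)-s)^(bb N)) * (((N:ℝ)-1)/(1-s)^2)
      = (pp N * ((N:ℝ)-1)) * ((1-s)^(bb N)/((N:ℝ)-s)^(bb N)) / (1-s)^2 from by ring,
    hp_mul hN, A3_eq hN hs1]
  field_simp


lemma hasDerivAt_F {s : ℝ} (hs : s ≤ aa N) :
    HasDerivAt (fun t => cc N / (N:ℝ) * (qq N t ^ pp N * ((1-t)⁻¹ - ((N:ℝ)+1))))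
      (s * fstar N s) s := by
  have hs1 : s < 1 := lt_of_le_of_lt hs (haa1 hN)
  have hA : (0:ℝ) < 1 - s := by linarith
  have hB := hB' hN hs1
  have hq := hq_pos hN hs1
  have hAb : (0:ℝ) < (1-s)^(bb N) := rpow_pos_of_pos hA _
  have hBb : (0:ℝ) < ((N:ℝ)-s)^(bb N) := rpow_pos_of_pos hB _
  have h2' : HasDerivAt (fun t : ℝ => 1 - t) (-1) s := (hasDerivAt_id s).const_sub 1
  have h2 : HasDerivAt (fun t : ℝ => (1-t)⁻¹ - ((N:ℝ)+1))
      ((1-s)^2)⁻¹ s := by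
    have := (h2'.inv (by linarith : (1:ℝ) - s ≠ 0)).sub_const ((N:ℝ)+1)
    refine this.congr_deriv ?_
    field_simp
  have := ((hasDerivAt_qp hN hs1).mul h2).const_mul (cc N / (N:ℝ))
  refine this.congr_deriv ?_
  have qsplit : qq N s ^ pp N = qq N s ^ (pp N - 1) * qq N s := by
    nth_rewrite 1 [show pp N = (pp N - 1) + 1 by ring]
    rw [rpow_add_one hq.ne' (pp N - 1)]
  rw [fstar_eq hN hs, qsplit, qp_eq hN hs1, A3_eq hN hs1,
    show ∀ X Y : ℝ, pp N * X * (((N:ℝ)-1)/(1-s)^2) * Y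
      = (pp N * ((N:ℝ)-1)) * X / (1-s)^2 * Y from by intro X Y; ring,
    hp_mul hN, qq]
  field_simp
  ring


lemma contOn {x : ℝ} (hxa : x ≤ aa N) : ContinuousOn (fstar N) (Set.Icc 0 x) := by
  have ha1 := haa1 hN
  have hn := hn1 hN
  have hcont : ContinuousOn (fun s : ℝ =>
      cc N / ((1-s) ^ ((3:ℝ) - bb N) * ((N:ℝ)-s) ^ (bb N))) (Set.Icc 0 x) := by
    apply ContinuousOn.div continuousOn_const
    · apply ContinuousOn.mul
      · exact ((continuous_const.sub continuous_id).continuousOn).rpow_const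
          (fun t ht => Or.inl (ne_of_gt (show (0:ℝ) < 1 - t by linarith [ht.2])))
      · exact ((continuous_const.sub continuous_id).continuousOn).rpow_const
          (fun t ht => Or.inl (ne_of_gt (show (0:ℝ) < (N:ℝ) - t by linarith [ht.2])))
    · intro t ht
      have h1 : (0:ℝ) < 1 - t := by linarith [ht.2]
      have h2 : (0:ℝ) < (N:ℝ) - t := by linarith [ht.2]
      positivity
  exact hcont.congr (fun t ht => fstar_eq hN (ht.2.trans hxa))

lemma integrable_one {x : ℝ} (hx0 : 0 ≤ x) (hxa : x ≤ aa N) :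
    IntervalIntegrable (fun s => (1-s) * fstar N s) volume 0 x := by
  apply ContinuousOn.intervalIntegrable
  rw [Set.uIcc_of_le hx0]
  exact ((continuous_const.sub continuous_id).continuousOn).mul (contOn hN hxa)

lemma integrable_two {x : ℝ} (hx0 : 0 ≤ x) (hxa : x ≤ aa N) :
    IntervalIntegrable (fun s => s * fstar N s) volume 0 x := by
  apply ContinuousOn.intervalIntegrable
  rw [Set.uIcc_of_le hx0]
  exact continuous_id.continuousOn.mul (contOn hN hxa)

lemma integral_one {x : ℝ} (hx0 : 0 ≤ x) (hxa : x ≤ aa N) :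
    ∫ s in (0:ℝ)..x, (1-s) * fstar N s
      = cc N * qq N x ^ pp N - cc N * (N:ℝ) ^ pp N := by
  have key := intervalIntegral.integral_eq_sub_of_hasDerivAt
    (f := fun t => cc N * qq N t ^ pp N) (f' := fun s => (1-s) * fstar N s)
    (fun t ht => by
      rw [Set.uIcc_of_le hx0] at ht
      exact hasDerivAt_G hN (ht.2.trans hxa))
    (integrable_one hN hx0 hxa)
  have q0 : qq N 0 = (N:ℝ) := by rw [qq]; norm_num
  rw [key]
  rw [q0]

lemma integral_two {x : ℝ} (hx0 : 0 ≤ x) (hxa : x ≤ aa N) :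
    ∫ s in (0:ℝ)..x, s * fstar N s
      = cc N / (N:ℝ) * (qq N x ^ pp N * ((1-x)⁻¹ - ((N:ℝ)+1)))
        + cc N * (N:ℝ) ^ pp N := by
  have key := intervalIntegral.integral_eq_sub_of_hasDerivAt
    (f := fun t => cc N / (N:ℝ) * (qq N t ^ pp N * ((1-t)⁻¹ - ((N:ℝ)+1))))
    (f' := fun s => s * fstar N s)
    (fun t ht => by
      rw [Set.uIcc_of_le hx0] at ht
      exact hasDerivAt_F hN (ht.2.trans hxa))
    (integrable_two hN hx0 hxa)
  have q0 : qq N 0 = (N:ℝ) := by rw [qq]; norm_num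
  have h0 := hn0 hN
  rw [key]
  rw [q0]
  field_simp
  ring


lemma cc_npow : cc N * ((N:ℝ)) ^ (pp N) = (N:ℝ) ^ (-(pp N)) := by
  have h0 := hn0 hN
  have h1 := hnm1 hN
  rw [cc, pp, ← rpow_add h0]
  congr 1
  field_simp
  ring

lemma qq_aa : qq N (aa N) = (N:ℝ)^(2:ℕ) := by
  have h0 := hn0 hN
  rw [qq, aa]
  have h1 : (N:ℝ) + 1 ≠ 0 := by linarith
  field_simp
  ring

lemma cc_n2 : cc N * ((N:ℝ)^(2:ℕ)) ^ (pp N) = 1 := by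
  have h0 := hn0 hN
  have h1 := hnm1 hN
  rw [← rpow_natCast (N:ℝ) 2, ← rpow_mul h0.le, cc, ← rpow_add h0]
  rw [show -(2:ℝ)/((N:ℝ)-1) + (2:ℕ) * pp N = 0 from by rw [pp]; push_cast; field_simp; ring]
  exact rpow_zero _

lemma inv_one_sub_aa : ((1:ℝ) - aa N)⁻¹ = (N:ℝ) + 1 := by
  have h0 := hn0 hN
  rw [aa]
  have h1 : (N:ℝ) + 1 ≠ 0 := by linarith
  rw [show (1:ℝ) - (N:ℝ)/((N:ℝ)+1) = 1/((N:ℝ)+1) from by field_simp; ring]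
  simp

lemma vint : (∫ s in (0:ℝ)..1, s * fstar N s) = (N:ℝ) ^ (-(pp N)) := by
  have ha1 := haa1 hN
  have h2 : IntervalIntegrable (fun s => s * fstar N s) volume (aa N) 1 := by
    rw [intervalIntegrable_iff_integrableOn_Ioc_of_le ha1.le]
    exact (integrableOn_congr_fun
      (fun s hs => by rw [fstar_zero hN hs.1, mul_zero]) measurableSet_Ioc).mpr
      (integrableOn_zero)
  have hz : (∫ s in (aa N)..1, s * fstar N s) = 0 := by
    rw [intervalIntegral.integral_of_le ha1.le]
    exact setIntegral_eq_zero_of_forall_eq_zero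
      (fun t ht => by rw [fstar_zero hN ht.1, mul_zero])
  rw [← intervalIntegral.integral_add_adjacent_intervals
      (integrable_two hN (haa0 hN) le_rfl) h2, hz, add_zero,
    integral_two hN (haa0 hN) le_rfl, inv_one_sub_aa hN]
  simp only [sub_self, mul_zero, zero_add, cc_npow hN]

lemma vstar : Vstar N = (N:ℝ) ^ (-(pp N)) := vint hN

lemma ustar_low {x : ℝ} (hx0 : 0 ≤ x) (hxa : x ≤ aa N) :
    Ustar N x = cc N * qq N x ^ pp N := by
  rw [Ustar, integral_one hN hx0 hxa, vint hN]
  have := cc_npow hN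
  linarith

lemma ustar_high {x : ℝ} (hax : aa N < x) (hx1 : x ≤ 1) :
    Ustar N x = 1 := by
  have h2 : IntervalIntegrable (fun s => (1-s) * fstar N s) volume (aa N) x := by
    rw [intervalIntegrable_iff_integrableOn_Ioc_of_le hax.le]
    exact (integrableOn_congr_fun
      (fun s hs => by rw [fstar_zero hN hs.1, mul_zero]) measurableSet_Ioc).mpr
      (integrableOn_zero)
  have hz : (∫ s in (aa N)..x, (1-s) * fstar N s) = 0 := by
    rw [intervalIntegral.integral_of_le hax.le]
    exact setIntegral_eq_zero_of_forall_eq_zero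
      (fun t ht => by rw [fstar_zero hN ht.1, mul_zero])
  rw [Ustar, ← intervalIntegral.integral_add_adjacent_intervals
      (integrable_one hN (haa0 hN) le_rfl) h2, hz, add_zero,
    integral_one hN (haa0 hN) le_rfl, vint hN, qq_aa hN]
  have h1 := cc_n2 hN
  have h2 := cc_npow hN
  linarith


lemma rpow_pow {y e : ℝ} (hy : 0 ≤ y) : (y^e)^(N-1) = y^(e*((N:ℝ)-1)) := by
  rw [← rpow_natCast (y^e) (N-1), ← rpow_mul hy]
  congr 1
  rw [Nat.cast_sub (by omega : 1 ≤ N)]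
  norm_num

end NashAux

/-- the expected winning probability
`P̄(x) = (1-x) U_*(x)^{N-1} + (x/N) V_*^{N-1}` of a player choosing `x` against
`N-1` opponents playing `f_*` satisfies `P̄(x) ≤ 1/N` for all `x ∈ [0,1]`, with
equality if and only if `x ∈ [0, N/(N+1)]`; hence `f_*` is a symmetric
mixed-strategy Nash equilibrium of the `N`-player elimination game. -/
theorem fstar_is_nash_equilibrium (N : ℕ) (hN : 2 ≤ N)
    (x : ℝ) (hx : x ∈ Set.Icc (0:ℝ) 1) :
    (1-x) * (Ustar N x) ^ (N-1) + (x/(N:ℝ)) * (Vstar N) ^ (N-1) ≤ 1/(N:ℝ) ∧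
    ((1-x) * (Ustar N x) ^ (N-1) + (x/(N:ℝ)) * (Vstar N) ^ (N-1) = 1/(N:ℝ)
      ↔ x ∈ Set.Icc (0:ℝ) ((N:ℝ)/((N:ℝ)+1))) := by
  have h0 := NashAux.hn0 hN
  have h1 := NashAux.hn1 hN
  have hm := NashAux.hnm1 hN
  have hVp : (Vstar N)^(N-1) = 1/(N:ℝ) := by
    rw [NashAux.vstar hN, NashAux.rpow_pow hN h0.le,
      show -(NashAux.pp N) * ((N:ℝ)-1) = -1 from by
        rw [NashAux.pp]; field_simp,
      rpow_neg_one]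
    exact (one_div _).symm
  rcases le_or_gt x (NashAux.aa N) with hxa | hax
  · have hx1 : x < 1 := lt_of_le_of_lt hxa (NashAux.haa1 hN)
    have hAx : (0:ℝ) < 1 - x := by linarith
    have hq := NashAux.hq_pos hN hx1
    have hccp : (NashAux.cc N)^(N-1) = ((N:ℝ)^(2:ℕ))⁻¹ := by
      rw [NashAux.cc, NashAux.rpow_pow hN h0.le,
        show -(2:ℝ)/((N:ℝ)-1) * ((N:ℝ)-1) = -((2:ℕ):ℝ) from by
          push_cast; field_simp,
        rpow_neg h0.le, rpow_natCast]
    have hqp : (NashAux.qq N x ^ NashAux.pp N)^(N-1) = NashAux.qq N x := by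
      rw [NashAux.rpow_pow hN hq.le, NashAux.hp_mul hN, rpow_one]
    have key : (1-x) * (Ustar N x)^(N-1) + (x/(N:ℝ)) * (Vstar N)^(N-1) = 1/(N:ℝ) := by
      rw [NashAux.ustar_low hN hx.1 hxa, hVp, mul_pow, hccp, hqp, NashAux.qq]
      field_simp
      ring
    exact ⟨key.le, ⟨fun _ => ⟨hx.1, hxa⟩, fun _ => key⟩⟩
  · have hU := NashAux.ustar_high hN hax hx.2
    have hax' : (N:ℝ)/((N:ℝ)+1) < x := by rw [NashAux.aa] at hax; exact hax
    have hkey : (N:ℝ) < x*((N:ℝ)+1) := by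
      rw [div_lt_iff₀ (by linarith : (0:ℝ) < (N:ℝ)+1)] at hax'; linarith
    have hlt : (1-x) * (Ustar N x)^(N-1) + (x/(N:ℝ)) * (Vstar N)^(N-1) < 1/(N:ℝ) := by
      rw [hU, one_pow, hVp, mul_one,
        show 1 - x + x/(N:ℝ)*(1/(N:ℝ))
          = 1/(N:ℝ) - (((N:ℝ)-1)*(x*((N:ℝ)+1)-(N:ℝ)))/(N:ℝ)^2 from by
            field_simp; ring]
      have hpos : (0:ℝ) < (((N:ℝ)-1)*(x*((N:ℝ)+1)-(N:ℝ)))/(N:ℝ)^2 :=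
        div_pos (mul_pos (by linarith) (by linarith)) (by positivity)
      linarith
    exact ⟨hlt.le, ⟨fun h => absurd h (ne_of_lt hlt),
      fun h => absurd h.2 (not_le.mpr hax')⟩⟩
end

section
/- For every integer N ≥ 2 and every x ∈ [0, N/(N+1)), the Nash-equilibrium density satisfies the first-order condition −U_*(x)^{N-1} + (N-1)(1-x)^2 f_*(x) U_*(x)^{N-2} + (1/N) V_*^{N-1} = 0. -/
open Real MeasureTheory

lemma hasDerivAt_prod (M c d s : ℝ) (hsM : s < M) (hs1 : s < 1) :
    HasDerivAt (fun t => (M - t) ^ c * (1 - t) ^ d)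
      ((-1 * c * (M - s) ^ (c - 1)) * (1 - s) ^ d
        + (M - s) ^ c * (-1 * d * (1 - s) ^ (d - 1))) s := by
  have hu : (0:ℝ) < M - s := by linarith
  have hv : (0:ℝ) < 1 - s := by linarith
  have h1 : HasDerivAt (fun t : ℝ => M - t) (-1) s := by
    simpa using (hasDerivAt_id s).const_sub M
  have h2 : HasDerivAt (fun t : ℝ => 1 - t) (-1) s := by
    simpa using (hasDerivAt_id s).const_sub 1
  exact (h1.rpow_const (Or.inl hu.ne')).mul (h2.rpow_const (Or.inl hv.ne'))


lemma integral_oneA (N : ℕ) (hN : 2 ≤ N) {x : ℝ} (hx0 : 0 ≤ x) (hxa : x ≤ (N:ℝ)/((N:ℝ)+1)) :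
    ∫ s in (0:ℝ)..x, (1-s) * fstar N s
      = (N:ℝ) ^ (-(2:ℝ)/((N:ℝ)-1)) * (((N:ℝ)-x) ^ ((1:ℝ)/((N:ℝ)-1)) * (1-x) ^ (-((1:ℝ)/((N:ℝ)-1))))
        - (N:ℝ) ^ (-(2:ℝ)/((N:ℝ)-1)) * (N:ℝ) ^ ((1:ℝ)/((N:ℝ)-1)) := by
  have hM : (2:ℝ) ≤ (N:ℝ) := by exact_mod_cast hN
  set M : ℝ := (N:ℝ) with hMdef
  set p : ℝ := 1/(M-1) with hp
  set b : ℝ := (M-2)/(M-1) with hb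
  set C : ℝ := M ^ (-(2:ℝ)/(M-1)) with hC
  have hM1 : (0:ℝ) < M - 1 := by linarith
  have hM0 : (0:ℝ) < M := by linarith
  have hx1 : x < 1 := by
    have : M/(M+1) < 1 := by
      rw [div_lt_one (by linarith)]; linarith
    linarith [hxa]
  have hp1 : p * (M - 1) = 1 := by rw [hp]; field_simp
  have h3b : (3:ℝ) - b = 2 + p := by rw [hb, hp]; field_simp; ring
  have hb1 : b = 1 - p := by rw [hb, hp]; field_simp; ring
  set g : ℝ → ℝ := fun s => (1-s) * (C / ((1-s) ^ ((3:ℝ) - b) * (M-s) ^ b)) with hg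
  have hfacts : ∀ s ∈ Set.uIcc (0:ℝ) x, s < 1 ∧ s < M := by
    intro s hs
    rw [Set.uIcc_of_le hx0] at hs
    exact ⟨lt_of_le_of_lt hs.2 hx1, by linarith [lt_of_le_of_lt hs.2 hx1]⟩
  have hEq : Set.EqOn (fun s => (1-s) * fstar N s) g (Set.uIcc (0:ℝ) x) := by
    intro s hs
    rw [Set.uIcc_of_le hx0] at hs
    simp only [fstar, hg]
    rw [if_pos (le_trans hs.2 hxa)]
  rw [intervalIntegral.integral_congr hEq]
  have hderiv : ∀ s ∈ Set.uIcc (0:ℝ) x,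
      HasDerivAt (fun t => C * ((M-t) ^ p * (1-t) ^ (-p))) (g s) s := by
    intro s hs
    obtain ⟨hs1, hsM⟩ := hfacts s hs
    have hu : (0:ℝ) < M - s := by linarith
    have hv : (0:ℝ) < 1 - s := by linarith
    have H := (hasDerivAt_prod M p (-p) s hsM hs1).const_mul C
    refine H.congr_deriv (Eq.symm ?_)
    have hA : (0:ℝ) < (M-s) ^ p := rpow_pos_of_pos hu p
    have hB : (0:ℝ) < (1-s) ^ p := rpow_pos_of_pos hv p
    have e1 : (M-s) ^ (p-1) = (M-s) ^ p / (M-s) := by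
      rw [Real.rpow_sub hu, Real.rpow_one]
    have e2 : (1-s) ^ (-p) = ((1-s) ^ p)⁻¹ := by rw [Real.rpow_neg hv.le]
    have e3 : (1-s) ^ (-p-1) = ((1-s) ^ p)⁻¹ / (1-s) := by
      rw [Real.rpow_sub hv, Real.rpow_one, Real.rpow_neg hv.le]
    have e4 : (1-s) ^ ((3:ℝ)-b) = (1-s)^2 * (1-s) ^ p := by
      rw [h3b, Real.rpow_add hv, show ((2:ℝ)) = ((2:ℕ):ℝ) by norm_num, Real.rpow_natCast]
    have e5 : (M-s) ^ b = (M-s) / (M-s) ^ p := by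
      rw [hb1, Real.rpow_sub hu, Real.rpow_one]
    rw [hg]
    simp only
    rw [e1, e2, e3, e4, e5]
    field_simp
    linear_combination (-C) * hp1
  have hint : IntervalIntegrable g volume 0 x := by
    apply ContinuousOn.intervalIntegrable
    apply ContinuousOn.mul (by fun_prop)
    apply ContinuousOn.div continuousOn_const
    · apply ContinuousOn.mul
      · exact ((continuous_const.sub continuous_id).continuousOn).rpow_const
          (fun s hs => Or.inl (ne_of_gt (by linarith [(hfacts s hs).1] : (0:ℝ) < 1 - s)))
      · exact ((continuous_const.sub continuous_id).continuousOn).rpow_const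
          (fun s hs => Or.inl (ne_of_gt (by linarith [(hfacts s hs).2] : (0:ℝ) < M - s)))
    · intro s hs
      obtain ⟨hs1, hsM⟩ := hfacts s hs
      exact (mul_pos (rpow_pos_of_pos (by linarith) _) (rpow_pos_of_pos (by linarith) _)).ne'
  rw [intervalIntegral.integral_eq_sub_of_hasDerivAt hderiv hint]
  simp [Real.one_rpow]

lemma Vstar_eqA (N : ℕ) (hN : 2 ≤ N) :
    Vstar N = (N:ℝ) ^ (-(2:ℝ)/((N:ℝ)-1)) * (N:ℝ) ^ ((1:ℝ)/((N:ℝ)-1)) := by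
  have hM : (2:ℝ) ≤ (N:ℝ) := by exact_mod_cast hN
  set M : ℝ := (N:ℝ) with hMdef
  set p : ℝ := 1/(M-1) with hp
  set b : ℝ := (M-2)/(M-1) with hb
  set C : ℝ := M ^ (-(2:ℝ)/(M-1)) with hC
  set a : ℝ := M/(M+1) with ha
  have hM1 : (0:ℝ) < M - 1 := by linarith
  have hM0 : (0:ℝ) < M := by linarith
  have ha0 : 0 ≤ a := by positivity
  have ha1 : a < 1 := by rw [ha, div_lt_one (by linarith)]; linarith
  have hp1 : p * (M - 1) = 1 := by rw [hp]; field_simp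
  have h3b : (3:ℝ) - b = 2 + p := by rw [hb, hp]; field_simp; ring
  have hb1 : b = 1 - p := by rw [hb, hp]; field_simp; ring
  set g : ℝ → ℝ := fun s => s * (C / ((1-s) ^ ((3:ℝ) - b) * (M-s) ^ b)) with hg
  have hfacts : ∀ s ∈ Set.uIcc (0:ℝ) a, s < 1 ∧ s < M := by
    intro s hs
    rw [Set.uIcc_of_le ha0] at hs
    exact ⟨lt_of_le_of_lt hs.2 ha1, by linarith [lt_of_le_of_lt hs.2 ha1]⟩
  have hEq : Set.EqOn (fun s => s * fstar N s) g (Set.uIcc (0:ℝ) a) := by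
    intro s hs
    rw [Set.uIcc_of_le ha0] at hs
    simp only [fstar, hg]
    rw [if_pos hs.2]
  -- the antiderivative on [0, a]
  set K : ℝ → ℝ := fun t =>
    C/M * ((M-t) ^ p * (1-t) ^ (-p-1)) - C*(M+1)/M * ((M-t) ^ p * (1-t) ^ (-p)) with hK
  have hderiv : ∀ s ∈ Set.uIcc (0:ℝ) a, HasDerivAt K (g s) s := by
    intro s hs
    obtain ⟨hs1, hsM⟩ := hfacts s hs
    have hu : (0:ℝ) < M - s := by linarith
    have hv : (0:ℝ) < 1 - s := by linarith
    have H := ((hasDerivAt_prod M p (-p-1) s hsM hs1).const_mul (C/M)).sub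
      ((hasDerivAt_prod M p (-p) s hsM hs1).const_mul (C*(M+1)/M))
    refine H.congr_deriv (Eq.symm ?_)
    have hA : (0:ℝ) < (M-s) ^ p := rpow_pos_of_pos hu p
    have hB : (0:ℝ) < (1-s) ^ p := rpow_pos_of_pos hv p
    have e1 : (M-s) ^ (p-1) = (M-s) ^ p / (M-s) := by
      rw [Real.rpow_sub hu, Real.rpow_one]
    have e2 : (1-s) ^ (-p) = ((1-s) ^ p)⁻¹ := by rw [Real.rpow_neg hv.le]
    have e3 : (1-s) ^ (-p-1) = ((1-s) ^ p)⁻¹ / (1-s) := by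
      rw [Real.rpow_sub hv, Real.rpow_one, Real.rpow_neg hv.le]
    have e3' : (1-s) ^ (-p-1-1) = ((1-s) ^ p)⁻¹ / (1-s) / (1-s) := by
      rw [Real.rpow_sub hv, Real.rpow_one, e3]
    have e4 : (1-s) ^ ((3:ℝ)-b) = (1-s)^2 * (1-s) ^ p := by
      rw [h3b, Real.rpow_add hv, show ((2:ℝ)) = ((2:ℕ):ℝ) by norm_num, Real.rpow_natCast]
    have e5 : (M-s) ^ b = (M-s) / (M-s) ^ p := by
      rw [hb1, Real.rpow_sub hu, Real.rpow_one]
    rw [hg]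
    simp only
    rw [e1, e2, e3, e3', e4, e5]
    field_simp
    linear_combination (C * ((1-s)*(M+1) - 1)) * hp1
  have hint : IntervalIntegrable g volume 0 a := by
    apply ContinuousOn.intervalIntegrable
    apply ContinuousOn.mul continuousOn_id
    apply ContinuousOn.div continuousOn_const
    · apply ContinuousOn.mul
      · exact ((continuous_const.sub continuous_id).continuousOn).rpow_const
          (fun s hs => Or.inl (ne_of_gt (by linarith [(hfacts s hs).1] : (0:ℝ) < 1 - s)))
      · exact ((continuous_const.sub continuous_id).continuousOn).rpow_const
          (fun s hs => Or.inl (ne_of_gt (by linarith [(hfacts s hs).2] : (0:ℝ) < M - s)))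
    · intro s hs
      obtain ⟨hs1, hsM⟩ := hfacts s hs
      exact (mul_pos (rpow_pos_of_pos (by linarith) _) (rpow_pos_of_pos (by linarith) _)).ne'
  have hIa : ∫ s in (0:ℝ)..a, s * fstar N s = C * M ^ p := by
    rw [intervalIntegral.integral_congr hEq,
      intervalIntegral.integral_eq_sub_of_hasDerivAt hderiv hint]
    have hav : (1:ℝ) - a = (M+1)⁻¹ := by rw [ha]; field_simp; ring
    have hw : ((M+1:ℝ)⁻¹) ^ (-p-1) = ((M+1:ℝ)⁻¹) ^ (-p) * (M+1) := by
      rw [Real.rpow_sub (by positivity), Real.rpow_one]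
      field_simp
    rw [hK]
    simp only [hav, hw, sub_zero, Real.one_rpow]
    field_simp
    ring
  -- the tail integral vanishes
  have h0 : ∀ s ∈ Set.uIoc a (1:ℝ), s * fstar N s = 0 := by
    intro s hs
    rw [Set.uIoc_of_le ha1.le] at hs
    simp [fstar, if_neg (show ¬ s ≤ (N:ℝ)/((N:ℝ)+1) from not_le.2 hs.1)]
  have h2 : IntervalIntegrable (fun s => s * fstar N s) volume a 1 := by
    apply (intervalIntegrable_const (c := (0:ℝ))).congr
    exact fun s hs => (h0 s hs).symm
  have h1 : IntervalIntegrable (fun s => s * fstar N s) volume 0 a := by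
    apply hint.congr
    refine fun s hs => ?_
    exact (hEq (Set.uIoc_subset_uIcc hs)).symm
  have hIb : ∫ s in a..(1:ℝ), s * fstar N s = 0 := by
    rw [intervalIntegral.integral_congr_ae (Filter.Eventually.of_forall h0)]
    simp
  rw [Vstar, ← intervalIntegral.integral_add_adjacent_intervals h1 h2, hIa, hIb, add_zero]

/-- the first-order condition: for `N ≥ 2` and `x ∈ [0, N/(N+1))`,
`-U_*(x)^{N-1} + (N-1)(1-x)² f_*(x) U_*(x)^{N-2} + (1/N) V_*^{N-1} = 0`. -/
theorem first_order_condition (N : ℕ) (hN : 2 ≤ N)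
    (x : ℝ) (hx : x ∈ Set.Ico (0:ℝ) ((N:ℝ)/((N:ℝ)+1))) :
    -(Ustar N x) ^ (N-1)
      + ((N:ℝ)-1) * (1-x)^2 * fstar N x * (Ustar N x) ^ (N-2)
      + (1/(N:ℝ)) * (Vstar N) ^ (N-1) = 0 := by
  obtain ⟨hx0, hxa⟩ := hx
  have hM : (2:ℝ) ≤ (N:ℝ) := by exact_mod_cast hN
  have hf0 : fstar N x = (N:ℝ) ^ (-(2:ℝ)/((N:ℝ)-1)) /
      ((1-x) ^ ((3:ℝ) - ((N:ℝ)-2)/((N:ℝ)-1)) * ((N:ℝ)-x) ^ (((N:ℝ)-2)/((N:ℝ)-1))) := by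
    unfold fstar
    rw [if_pos hxa.le]
  have hI := integral_oneA N hN hx0 hxa.le
  have hV := Vstar_eqA N hN
  set M : ℝ := (N:ℝ) with hMdef
  set p : ℝ := 1/(M-1) with hp
  set b : ℝ := (M-2)/(M-1) with hb
  set C : ℝ := M ^ (-(2:ℝ)/(M-1)) with hC
  have hM1 : (0:ℝ) < M - 1 := by linarith
  have hM0 : (0:ℝ) < M := by linarith
  have hx1 : x < 1 := by
    have : M/(M+1) < 1 := by rw [div_lt_one (by linarith)]; linarith
    linarith
  have hu : (0:ℝ) < M - x := by linarith
  have hv : (0:ℝ) < 1 - x := by linarith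
  have hp1 : p * (M - 1) = 1 := by rw [hp]; field_simp
  have hpb : p * (M - 2) = b := by rw [hp, hb]; ring
  have hb1 : b = 1 - p := by rw [hb, hp]; field_simp; ring
  have hC0 : (0:ℝ) < C := rpow_pos_of_pos hM0 _
  have hU : Ustar N x = C * ((M-x) ^ p * (1-x) ^ (-p)) := by
    unfold Ustar
    rw [hI, show (∫ s in (0:ℝ)..1, s * fstar N s) = C * M ^ p from hV]
    ring
  have hr : ∀ k : ℕ, (Ustar N x) ^ k
      = C ^ ((k:ℕ):ℝ) * ((M-x) ^ (p * ((k:ℕ):ℝ)) * (1-x) ^ (-p * ((k:ℕ):ℝ))) := by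
    intro k
    rw [hU, ← Real.rpow_natCast (C * ((M-x) ^ p * (1-x) ^ (-p))) k,
      Real.mul_rpow hC0.le (by positivity),
      Real.mul_rpow (by positivity) (by positivity),
      ← Real.rpow_mul hu.le, ← Real.rpow_mul hv.le, neg_mul]
  have hcast1 : (((N-1:ℕ)):ℝ) = M - 1 := by
    rw [Nat.cast_sub (by omega), Nat.cast_one]
  have hcast2 : (((N-2:ℕ)):ℝ) = M - 2 := by
    rw [Nat.cast_sub hN, Nat.cast_ofNat]
  have e1 : (Ustar N x) ^ (N-1) = C ^ (M-1) * ((M-x) * (1-x)⁻¹) := by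
    rw [hr (N-1), hcast1, hp1, show -p * (M-1) = -1 by linear_combination -hp1,
      Real.rpow_one, Real.rpow_neg_one]
  have e2 : (Ustar N x) ^ (N-2) = C ^ (M-2) * ((M-x) ^ b * (1-x) ^ (-b)) := by
    rw [hr (N-2), hcast2, hpb, show -p * (M-2) = -b by linear_combination -hpb]
  have eC1 : C ^ (M-1) = (M^2)⁻¹ := by
    rw [hC, ← Real.rpow_mul hM0.le, show -(2:ℝ)/(M-1) * (M-1) = -2 by field_simp,
      Real.rpow_neg hM0.le, show ((2:ℝ)) = ((2:ℕ):ℝ) by norm_num, Real.rpow_natCast]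
  have eCC : C * C ^ (M-2) = (M^2)⁻¹ := by
    nth_rewrite 1 [← Real.rpow_one C]
    rw [← Real.rpow_add hC0, show (1:ℝ) + (M-2) = M - 1 by ring, eC1]
  have eC3 : C ^ (M-2) = (M^2)⁻¹ / C := by
    rw [eq_div_iff hC0.ne']
    linear_combination eCC
  have eVp : (Vstar N) ^ (N-1) = M⁻¹ := by
    rw [show Vstar N = M ^ (-p) from by
        rw [hV, ← Real.rpow_add hM0]
        congr 1
        rw [hp]; ring,
      ← Real.rpow_natCast (M ^ (-p)) (N-1), ← Real.rpow_mul hM0.le, hcast1,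
      show -p * (M-1) = -1 by linear_combination -hp1, Real.rpow_neg_one]
  have e4 : (1-x) ^ ((3:ℝ)-b) = (1-x)^2 * (1-x) ^ p := by
    rw [show (3:ℝ) - b = 2 + p by rw [hb, hp]; field_simp; ring,
      Real.rpow_add hv, show ((2:ℝ)) = ((2:ℕ):ℝ) by norm_num, Real.rpow_natCast]
  have e6 : (1-x) ^ (-b) = (1-x) ^ p / (1-x) := by
    rw [show -b = p - 1 by rw [hb1]; ring, Real.rpow_sub hv, Real.rpow_one]
  have hw : (0:ℝ) < (M-x) ^ b := rpow_pos_of_pos hu b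
  have hB : (0:ℝ) < (1-x) ^ p := rpow_pos_of_pos hv p
  rw [e1, e2, eC1, eC3, hf0, eVp, e4, e6]
  field_simp
  ring
end

section
/- For every integer N ≥ 2, the Nash-equilibrium density f_* is differentiable on [0, N/(N+1)) and satisfies there the nonlinear first-order equation [−3 f_*(x) + (1-x) f_*'(x)] · U_*(x) + (N-2)(1-x)^2 f_*(x)^2 = 0. -/
open Real MeasureTheory

/-- auxiliary: the exponent `b = (N-2)/(N-1)`. -/
noncomputable def bb (N : ℕ) : ℝ := ((N:ℝ)-2)/((N:ℝ)-1)

/-- auxiliary: the constant `C_N`. -/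
noncomputable def CC (N : ℕ) : ℝ := (N:ℝ) ^ (-(2:ℝ)/((N:ℝ)-1))

/-- auxiliary: the smooth branch of `f_*`. -/
noncomputable def Fs (N : ℕ) (x : ℝ) : ℝ :=
  CC N / ((1-x) ^ ((3:ℝ) - bb N) * ((N:ℝ)-x) ^ (bb N))

/-- auxiliary: antiderivative of `(1-s) Fs s`. -/
noncomputable def gg (N : ℕ) (x : ℝ) : ℝ :=
  CC N * ((N:ℝ)-x) ^ ((1:ℝ) - bb N) * (1-x) ^ (bb N - 1)

/-- auxiliary: antiderivative of `s · Fs s`. -/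
noncomputable def HH (N : ℕ) (x : ℝ) : ℝ :=
  CC N * (((N:ℝ)+1)*x/(N:ℝ) - 1) * (1-x) ^ (bb N - 2) * ((N:ℝ)-x) ^ ((1:ℝ) - bb N)

lemma hasDerivAt_const_sub_rpow (c p x : ℝ) (h : c - x ≠ 0) :
    HasDerivAt (fun y => (c - y) ^ p) (-(p * (c-x)^(p-1))) x := by
  have h1 : HasDerivAt (fun y : ℝ => c - y) (-1) x := by
    exact (hasDerivAt_id' x).const_sub c
  have := (Real.hasDerivAt_rpow_const (x := c - x) (p := p) (Or.inl h)).comp x h1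
  simpa [mul_comm, Function.comp_def] using this

lemma hasDerivAt_Fs (N : ℕ) (hN : 2 ≤ N) {x : ℝ} (hx : x < 1) :
    HasDerivAt (Fs N) (Fs N x * (((3:ℝ) - bb N)/(1-x) + bb N/((N:ℝ)-x))) x := by
  have hn : (2:ℝ) ≤ (N:ℝ) := by exact_mod_cast hN
  have h1 : 0 < 1 - x := by linarith
  have h2 : 0 < (N:ℝ) - x := by linarith
  set b := bb N with hb
  set C := CC N with hC
  have d1 : HasDerivAt (fun y => (1 - y) ^ ((3:ℝ) - b)) (-(((3:ℝ)-b) * (1-x)^((3:ℝ)-b-1))) x :=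
    hasDerivAt_const_sub_rpow 1 _ x h1.ne'
  have d2 : HasDerivAt (fun y => ((N:ℝ) - y) ^ b) (-(b * ((N:ℝ)-x)^(b-1))) x :=
    hasDerivAt_const_sub_rpow _ _ x h2.ne'
  have hP : 0 < (1-x) ^ ((3:ℝ) - b) := Real.rpow_pos_of_pos h1 _
  have hB : 0 < ((N:ℝ)-x) ^ b := Real.rpow_pos_of_pos h2 _
  have dF := (hasDerivAt_const x C).div (d1.mul d2) (mul_pos hP hB).ne'
  have hFs : Fs N = fun y => C / ((1-y) ^ ((3:ℝ) - b) * ((N:ℝ)-y) ^ b) := rfl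
  rw [hFs]
  refine HasDerivAt.congr_deriv dF (Eq.symm ?_)
  simp only [Pi.mul_apply]
  have r1 : (1-x) ^ ((3:ℝ)-b-1) = (1-x) ^ ((3:ℝ)-b) / (1-x) := by
    rw [Real.rpow_sub h1, Real.rpow_one]
  have r2 : ((N:ℝ)-x) ^ (b-1) = ((N:ℝ)-x) ^ b / ((N:ℝ)-x) := by
    rw [Real.rpow_sub h2, Real.rpow_one]
  rw [r1, r2]
  field_simp
  ring

lemma hasDerivAt_gg (N : ℕ) (hN : 2 ≤ N) {x : ℝ} (hx : x < 1) :
    HasDerivAt (gg N) ((1-x) * Fs N x) x := by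
  have hn : (2:ℝ) ≤ (N:ℝ) := by exact_mod_cast hN
  have h1 : 0 < 1 - x := by linarith
  have h2 : 0 < (N:ℝ) - x := by linarith
  set b := bb N with hbdef
  set C := CC N with hC
  have hb : b = ((N:ℝ)-2)/((N:ℝ)-1) := rfl
  have d1 : HasDerivAt (fun y => ((N:ℝ) - y) ^ ((1:ℝ) - b)) (-(((1:ℝ)-b) * ((N:ℝ)-x)^((1:ℝ)-b-1))) x :=
    hasDerivAt_const_sub_rpow _ _ x h2.ne'
  have d2 : HasDerivAt (fun y => (1 - y) ^ (b - 1)) (-((b-1) * (1-x)^(b-1-1))) x :=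
    hasDerivAt_const_sub_rpow _ _ x h1.ne'
  have dg := (d1.const_mul C).mul d2
  have hgg : gg N = fun y => C * ((N:ℝ)-y) ^ ((1:ℝ) - b) * (1-y) ^ (b - 1) := rfl
  rw [hgg]
  refine HasDerivAt.congr_deriv dg (Eq.symm ?_)
  have hA : 0 < (1-x) ^ b := Real.rpow_pos_of_pos h1 _
  have hB : 0 < ((N:ℝ)-x) ^ b := Real.rpow_pos_of_pos h2 _
  have r1 : ((N:ℝ)-x) ^ ((1:ℝ)-b-1) = 1 / ((N:ℝ)-x) ^ b := by
    rw [show (1:ℝ)-b-1 = -b by ring, Real.rpow_neg h2.le, inv_eq_one_div]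
  have r2 : ((N:ℝ)-x) ^ ((1:ℝ)-b) = ((N:ℝ)-x) / ((N:ℝ)-x) ^ b := by
    rw [Real.rpow_sub h2, Real.rpow_one]
  have r3 : (1-x) ^ (b-1) = (1-x) ^ b / (1-x) := by
    rw [Real.rpow_sub h1, Real.rpow_one]
  have r4 : (1-x) ^ (b-1-1) = (1-x) ^ b / ((1-x)*(1-x)) := by
    rw [show b-1-1 = b-(1+1) by ring, Real.rpow_sub h1, Real.rpow_add h1, Real.rpow_one]
  have r5 : (1-x) ^ ((3:ℝ)-b) = (1-x)*(1-x)*(1-x) / (1-x) ^ b := by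
    rw [show (3:ℝ)-b = (1+1+1)-b by norm_num, Real.rpow_sub h1, Real.rpow_add h1,
      Real.rpow_add h1, Real.rpow_one]
  have hn1 : ((N:ℝ)-1) ≠ 0 := by linarith
  rw [Fs]
  rw [← hbdef, ← hC, r1, r2, r3, r4, r5, hb]
  field_simp
  ring

lemma hasDerivAt_HH (N : ℕ) (hN : 2 ≤ N) {x : ℝ} (hx : x < 1) :
    HasDerivAt (HH N) (x * Fs N x) x := by
  have hn : (2:ℝ) ≤ (N:ℝ) := by exact_mod_cast hN
  have h1 : 0 < 1 - x := by linarith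
  have h2 : 0 < (N:ℝ) - x := by linarith
  set b := bb N with hbdef
  set C := CC N with hC
  have hb : b = ((N:ℝ)-2)/((N:ℝ)-1) := rfl
  have d0 : HasDerivAt (fun y : ℝ => C * (((N:ℝ)+1)*y/(N:ℝ) - 1)) (C * (((N:ℝ)+1)/(N:ℝ))) x := by
    have : HasDerivAt (fun y : ℝ => ((N:ℝ)+1)*y/(N:ℝ) - 1) (((N:ℝ)+1)/(N:ℝ)) x := by
      simpa [mul_div_assoc, mul_comm] using
        (((hasDerivAt_id x).const_mul (((N:ℝ)+1)/(N:ℝ))).sub_const 1)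
    exact this.const_mul C
  have d2 : HasDerivAt (fun y => (1 - y) ^ (b - 2)) (-((b-2) * (1-x)^(b-2-1))) x :=
    hasDerivAt_const_sub_rpow _ _ x h1.ne'
  have d1 : HasDerivAt (fun y => ((N:ℝ) - y) ^ ((1:ℝ) - b)) (-(((1:ℝ)-b) * ((N:ℝ)-x)^((1:ℝ)-b-1))) x :=
    hasDerivAt_const_sub_rpow _ _ x h2.ne'
  have dH := (d0.mul d2).mul d1
  have hHH : HH N = fun y => C * (((N:ℝ)+1)*y/(N:ℝ) - 1) * (1-y) ^ (b - 2) * ((N:ℝ)-y) ^ ((1:ℝ) - b) := rfl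
  rw [hHH]
  refine HasDerivAt.congr_deriv dH (Eq.symm ?_)
  simp only [Pi.mul_apply]
  have hA : 0 < (1-x) ^ b := Real.rpow_pos_of_pos h1 _
  have hB : 0 < ((N:ℝ)-x) ^ b := Real.rpow_pos_of_pos h2 _
  have r1 : ((N:ℝ)-x) ^ ((1:ℝ)-b-1) = 1 / ((N:ℝ)-x) ^ b := by
    rw [show (1:ℝ)-b-1 = -b by ring, Real.rpow_neg h2.le, inv_eq_one_div]
  have r2 : ((N:ℝ)-x) ^ ((1:ℝ)-b) = ((N:ℝ)-x) / ((N:ℝ)-x) ^ b := by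
    rw [Real.rpow_sub h2, Real.rpow_one]
  have r3 : (1-x) ^ (b-2) = (1-x) ^ b / ((1-x)*(1-x)) := by
    rw [show b-2 = b-(1+1) by ring, Real.rpow_sub h1, Real.rpow_add h1, Real.rpow_one]
  have r4 : (1-x) ^ (b-2-1) = (1-x) ^ b / ((1-x)*(1-x)*(1-x)) := by
    rw [show b-2-1 = b-(1+1+1) by ring, Real.rpow_sub h1, Real.rpow_add h1,
      Real.rpow_add h1, Real.rpow_one]
  have r5 : (1-x) ^ ((3:ℝ)-b) = (1-x)*(1-x)*(1-x) / (1-x) ^ b := by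
    rw [show (3:ℝ)-b = (1+1+1)-b by norm_num, Real.rpow_sub h1, Real.rpow_add h1,
      Real.rpow_add h1, Real.rpow_one]
  have hn1 : ((N:ℝ)-1) ≠ 0 := by linarith
  have hn0 : (N:ℝ) ≠ 0 := by linarith
  rw [Fs]
  rw [← hbdef, ← hC, r1, r2, r3, r4, r5, hb]
  field_simp
  ring

lemma fstar_eq_Fs (N : ℕ) {y : ℝ} (hy : y ≤ (N:ℝ)/((N:ℝ)+1)) : fstar N y = Fs N y := by
  simp only [fstar, if_pos hy]; rfl

/-- `Ustar` equals the closed form `gg` on `[0, a)`. -/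
lemma Ustar_eq_gg (N : ℕ) (hN : 2 ≤ N) {x : ℝ}
    (hx0 : 0 ≤ x) (hxa : x < (N:ℝ)/((N:ℝ)+1)) : Ustar N x = gg N x := by
  have hn : (2:ℝ) ≤ (N:ℝ) := by exact_mod_cast hN
  set a : ℝ := (N:ℝ)/((N:ℝ)+1) with hadef
  have ha0 : 0 ≤ a := by positivity
  have ha1 : a < 1 := by
    rw [hadef, div_lt_one (by linarith)]; linarith
  have hx1 : x < 1 := lt_trans hxa ha1
  -- continuity of things built from Fs on subsets of (-∞, 1)
  have hcont : ∀ c : ℝ, c < 1 → ContinuousOn (Fs N) (Set.uIcc 0 c) := by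
    intro c hc s hs
    have hs1 : s < 1 := by
      rcases Set.mem_uIcc.1 hs with h | h
      · exact lt_of_le_of_lt h.2 hc
      · exact lt_of_le_of_lt h.2 (by linarith [h.1])
    exact ((hasDerivAt_Fs N hN hs1).continuousAt).continuousWithinAt
  -- first integral
  have I1 : (∫ s in (0:ℝ)..x, (1-s) * fstar N s) = gg N x - gg N 0 := by
    rw [intervalIntegral.integral_congr
      (g := fun s => (1-s) * Fs N s)
      (fun s hs => by
        rw [Set.uIcc_of_le hx0] at hs
        exact congrArg _ (fstar_eq_Fs N (le_of_lt (lt_of_le_of_lt hs.2 hxa))))]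
    refine intervalIntegral.integral_eq_sub_of_hasDerivAt (fun s hs => ?_) ?_
    · rw [Set.uIcc_of_le hx0] at hs
      exact hasDerivAt_gg N hN (lt_of_le_of_lt hs.2 hx1)
    · exact (((continuousOn_const.sub continuousOn_id).mul (hcont x hx1))).intervalIntegrable
  -- the tail of the second integral vanishes
  have htail0 : ∀ s ∈ Set.Ioc a 1, s * fstar N s = 0 := by
    intro s hs
    have : ¬ s ≤ a := not_le.2 hs.1
    rw [fstar, if_neg this, mul_zero]
  have htailInt : IntervalIntegrable (fun s => s * fstar N s) volume a 1 := by
    rw [intervalIntegrable_iff, Set.uIoc_of_le ha1.le]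
    exact (integrableOn_zero).congr_fun (fun s hs => (htail0 s hs).symm) measurableSet_Ioc
  -- the head of the second integral
  have hheadInt : IntervalIntegrable (fun s => s * fstar N s) volume 0 a := by
    have hInt : IntervalIntegrable (fun s => s * Fs N s) volume 0 a :=
      (continuousOn_id.mul (hcont a ha1)).intervalIntegrable
    rw [intervalIntegrable_iff] at hInt ⊢
    refine hInt.congr_fun (fun s hs => ?_) measurableSet_uIoc
    rw [Set.uIoc_of_le ha0] at hs
    exact (fstar_eq_Fs N hs.2 ▸ rfl : s * Fs N s = s * fstar N s)
  have Ihead : (∫ s in (0:ℝ)..a, s * fstar N s) = HH N a - HH N 0 := by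
    rw [intervalIntegral.integral_congr
      (g := fun s => s * Fs N s)
      (fun s hs => by
        rw [Set.uIcc_of_le ha0] at hs
        exact congrArg _ (fstar_eq_Fs N hs.2))]
    refine intervalIntegral.integral_eq_sub_of_hasDerivAt (fun s hs => ?_) ?_
    · rw [Set.uIcc_of_le ha0] at hs
      exact hasDerivAt_HH N hN (lt_of_le_of_lt hs.2 ha1)
    · exact (continuousOn_id.mul (hcont a ha1)).intervalIntegrable
  have Itail : (∫ s in a..(1:ℝ), s * fstar N s) = 0 := by
    rw [intervalIntegral.integral_congr_ae (g := fun _ => (0:ℝ))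
      (Filter.Eventually.of_forall (fun s hs => by
        rw [Set.uIoc_of_le ha1.le] at hs
        exact htail0 s hs))]
    simp
  have I2 : (∫ s in (0:ℝ)..1, s * fstar N s) = HH N a - HH N 0 := by
    rw [← intervalIntegral.integral_add_adjacent_intervals hheadInt htailInt, Ihead, Itail]
    ring
  -- values of HH and gg at special points
  have hHa : HH N a = 0 := by
    have hz : ((N:ℝ)+1)*a/(N:ℝ) - 1 = 0 := by
      rw [hadef]; field_simp; ring
    rw [HH, hz]; ring
  have hH0 : HH N 0 = -(gg N 0) := by
    rw [HH, gg]
    simp [Real.one_rpow]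
  rw [Ustar, I1, I2, hHa, hH0]
  ring

/-- for `N ≥ 2`, the Nash-equilibrium density `f_*` is
differentiable on `[0, N/(N+1))` and satisfies there the nonlinear first-order
equation `( -3 f_*(x) + (1-x) f_*'(x) ) U_*(x) + (N-2)(1-x)² f_*(x)² = 0`. -/
theorem fstar_first_order_ode (N : ℕ) (hN : 2 ≤ N)
    (x : ℝ) (hx : x ∈ Set.Ico (0:ℝ) ((N:ℝ)/((N:ℝ)+1))) :
    DifferentiableAt ℝ (fstar N) x ∧
    (-3 * fstar N x + (1-x) * deriv (fstar N) x) * Ustar N x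
      + ((N:ℝ)-2) * (1-x)^2 * (fstar N x)^2 = 0 := by
  obtain ⟨hx0, hxa⟩ := hx
  have hn : (2:ℝ) ≤ (N:ℝ) := by exact_mod_cast hN
  have ha1 : (N:ℝ)/((N:ℝ)+1) < 1 := by
    rw [div_lt_one (by linarith)]; linarith
  have hx1 : x < 1 := lt_trans hxa ha1
  have h1 : 0 < 1 - x := by linarith
  have h2 : 0 < (N:ℝ) - x := by linarith
  -- local equality with the smooth branch
  have heq : fstar N =ᶠ[nhds x] Fs N := by
    filter_upwards [Iio_mem_nhds hxa] with y hy
    exact fstar_eq_Fs N (le_of_lt hy)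
  have hD : HasDerivAt (fstar N) (Fs N x * (((3:ℝ) - bb N)/(1-x) + bb N/((N:ℝ)-x))) x :=
    (hasDerivAt_Fs N hN hx1).congr_of_eventuallyEq heq
  refine ⟨hD.differentiableAt, ?_⟩
  rw [hD.deriv, fstar_eq_Fs N hxa.le, Ustar_eq_gg N hN hx0 hxa]
  -- now a pure rpow computation
  set b := bb N with hbdef
  set C := CC N with hC
  have hb : b = ((N:ℝ)-2)/((N:ℝ)-1) := rfl
  have hA : 0 < (1-x) ^ b := Real.rpow_pos_of_pos h1 _
  have hB : 0 < ((N:ℝ)-x) ^ b := Real.rpow_pos_of_pos h2 _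
  have r2 : ((N:ℝ)-x) ^ ((1:ℝ)-b) = ((N:ℝ)-x) / ((N:ℝ)-x) ^ b := by
    rw [Real.rpow_sub h2, Real.rpow_one]
  have r3 : (1-x) ^ (b-1) = (1-x) ^ b / (1-x) := by
    rw [Real.rpow_sub h1, Real.rpow_one]
  have r5 : (1-x) ^ ((3:ℝ)-b) = (1-x)*(1-x)*(1-x) / (1-x) ^ b := by
    rw [show (3:ℝ)-b = (1+1+1)-b by norm_num, Real.rpow_sub h1, Real.rpow_add h1,
      Real.rpow_add h1, Real.rpow_one]
  have hn1 : ((N:ℝ)-1) ≠ 0 := by linarith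
  rw [Fs, gg, ← hbdef, ← hC, r2, r3, r5, hb]
  field_simp
  ring
end

section
/- Let N ≥ 3 be an integer, b = (N-2)/(N-1), and let B > 0 and C > 0 be real constants. Then the function f(x) = C / ((1-x)^{3-b} (1+B-x)^{b}) is twice differentiable on [0,1), satisfies 3 f(x) − (1-x) f'(x) > 0 there, and solves the nonlinear second-order ODE (1-x) f(x) = (N-2) · d/dx [ (1-x)^2 f(x)^2 / (3 f(x) − (1-x) f'(x)) ] for all x ∈ [0,1). -/
open Real

private lemma aux_hasDerivAt_shift (c p : ℝ) {x : ℝ} (h : c - x ≠ 0) :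
    HasDerivAt (fun y => (c - y) ^ p) (-(p * (c - x) ^ (p - 1))) x := by
  have h1 : HasDerivAt (fun y : ℝ => c - y) (-1) x := (hasDerivAt_id x).const_sub c
  have h2 : HasDerivAt (fun y => (c - y) ^ p) (p * (c - x) ^ (p - 1) * (-1)) x :=
    (Real.hasDerivAt_rpow_const (p := p) (Or.inl h)).comp x h1
  rw [mul_neg_one] at h2
  exact h2

/-- for an integer `N ≥ 3`, `b = (N-2)/(N-1)` and constants
`B, C > 0`, the function `f(x) = C / ((1-x)^{3-b} (1+B-x)^b)` is twice
differentiable on `[0,1)`, satisfies `3 f(x) - (1-x) f'(x) > 0` there, and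
solves the nonlinear second-order ODE
`(1-x) f(x) = (N-2) d/dx [ (1-x)² f(x)² / (3 f(x) - (1-x) f'(x)) ]`
for all `x ∈ [0,1)`. -/
theorem family_solves_second_order_ode (N : ℕ) (hN : 3 ≤ N)
    (B C : ℝ) (hB : 0 < B) (hC : 0 < C) (f : ℝ → ℝ)
    (hf : ∀ x : ℝ, f x =
      C / ((1-x) ^ ((3:ℝ) - ((N:ℝ)-2)/((N:ℝ)-1)) * (1+B-x) ^ (((N:ℝ)-2)/((N:ℝ)-1)))) :
    ∀ x ∈ Set.Ico (0:ℝ) 1,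
      DifferentiableAt ℝ f x ∧
      DifferentiableAt ℝ (deriv f) x ∧
      0 < 3 * f x - (1-x) * deriv f x ∧
      (1-x) * f x = ((N:ℝ)-2) *
        deriv (fun y => (1-y)^2 * (f y)^2 / (3 * f y - (1-y) * deriv f y)) x := by
  obtain ⟨b, hbdef⟩ : ∃ b : ℝ, b = ((N:ℝ)-2)/((N:ℝ)-1) := ⟨_, rfl⟩
  simp only [← hbdef] at hf
  have hN3 : (3:ℝ) ≤ (N:ℝ) := by exact_mod_cast hN
  have hN1 : (0:ℝ) < (N:ℝ)-1 := by linarith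
  have hN2 : (0:ℝ) < (N:ℝ)-2 := by linarith
  have hb0 : 0 < b := hbdef ▸ div_pos hN2 hN1
  have hb1 : b < 1 := hbdef ▸ (div_lt_one hN1).2 (by linarith)
  have hbid : ((N:ℝ)-2) * (1-b) = b := by
    rw [hbdef]; field_simp; ring
  -- formula for f on Iio 1
  have hfeq : ∀ y : ℝ, y < 1 → f y = C * ((1-y)^(b-3) * (1+B-y)^(-b)) := by
    intro y hy
    have hA : (0:ℝ) < 1 - y := by linarith
    have hD : (0:ℝ) < 1 + B - y := by linarith
    rw [hf y, show b-3 = -(3-b) by ring, Real.rpow_neg hA.le, Real.rpow_neg hD.le,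
      div_eq_mul_inv, mul_inv]
  -- derivative formula
  set F' : ℝ → ℝ := fun y =>
    C * ((3-b) * (1-y)^(b-4) * (1+B-y)^(-b) + b * (1-y)^(b-3) * (1+B-y)^(-b-1)) with hF'
  have hfd : ∀ y : ℝ, y < 1 → HasDerivAt f (F' y) y := by
    intro y hy
    have hA : (0:ℝ) < 1 - y := by linarith
    have hD : (0:ℝ) < 1 + B - y := by linarith
    have hG : HasDerivAt (fun z => C * ((1-z)^(b-3) * (1+B-z)^(-b))) (F' y) y := by
      have := ((aux_hasDerivAt_shift 1 (b-3) hA.ne').mul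
        (aux_hasDerivAt_shift (1+B) (-b) hD.ne')).const_mul C
      refine this.congr_deriv ?_
      rw [hF']
      rw [show b-3-1 = b-4 by ring]
      ring
    exact hG.congr_of_eventuallyEq
      (Filter.eventuallyEq_of_mem (Iio_mem_nhds hy) (fun z hz => hfeq z hz))
  have hdf : ∀ y : ℝ, y < 1 → deriv f y = F' y := fun y hy => (hfd y hy).deriv
  -- key denominator identity
  have hkey : ∀ y : ℝ, y < 1 → 3 * f y - (1-y) * deriv f y
      = C * b * B * ((1-y)^(b-3) * (1+B-y)^(-b-1)) := by
    intro y hy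
    have hA : (0:ℝ) < 1 - y := by linarith
    have hD : (0:ℝ) < 1 + B - y := by linarith
    have e1 : (1-y)^(b-3) = (1-y)^(b-4) * (1-y) := by
      rw [← Real.rpow_add_one hA.ne']; congr 1; ring
    have e2 : (1+B-y)^(-b) = (1+B-y)^(-b-1) * (1+B-y) := by
      rw [← Real.rpow_add_one hD.ne']; congr 1; ring
    rw [hfeq y hy, hdf y hy]
    simp only [hF']
    rw [e1, e2]
    ring
  have hpos : ∀ y : ℝ, y < 1 → 0 < 3 * f y - (1-y) * deriv f y := by
    intro y hy
    have hA : (0:ℝ) < 1 - y := by linarith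
    have hD : (0:ℝ) < 1 + B - y := by linarith
    rw [hkey y hy]
    positivity
  intro x hx
  obtain ⟨hx0, hx1⟩ := hx
  have hA : (0:ℝ) < 1 - x := by linarith
  have hD : (0:ℝ) < 1 + B - x := by linarith
  refine ⟨(hfd x hx1).differentiableAt, ?_, hpos x hx1, ?_⟩
  · -- deriv f differentiable
    have hF'd : DifferentiableAt ℝ F' x := by
      apply DifferentiableAt.const_mul
      apply DifferentiableAt.add
      · exact (((aux_hasDerivAt_shift 1 (b-4) hA.ne').differentiableAt.const_mul
          (3-b)).mul (aux_hasDerivAt_shift (1+B) (-b) hD.ne').differentiableAt)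
      · exact (((aux_hasDerivAt_shift 1 (b-3) hA.ne').differentiableAt.const_mul
          b).mul (aux_hasDerivAt_shift (1+B) (-b-1) hD.ne').differentiableAt)
    have hev : deriv f =ᶠ[nhds x] F' :=
      Filter.eventuallyEq_of_mem (Iio_mem_nhds hx1) (fun z hz => hdf z hz)
    exact hev.differentiableAt_iff.mpr hF'd
  · -- the ODE
    have hgeq : ∀ y : ℝ, y < 1 →
        (1-y)^2 * (f y)^2 / (3 * f y - (1-y) * deriv f y)
          = (C/(b*B)) * ((1-y)^(b-1) * (1+B-y)^(1-b)) := by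
      intro y hy
      have hA : (0:ℝ) < 1 - y := by linarith
      have hD : (0:ℝ) < 1 + B - y := by linarith
      have e1 : (1-y)^(b-1) = (1-y)^(b-3) * (1-y) * (1-y) := by
        rw [← Real.rpow_add_one hA.ne', ← Real.rpow_add_one hA.ne']; congr 1; ring
      have e2 : (1+B-y)^(1-b) = (1+B-y)^(-b-1) * (1+B-y) * (1+B-y) := by
        rw [← Real.rpow_add_one hD.ne', ← Real.rpow_add_one hD.ne']; congr 1; ring
      have e3 : (1+B-y)^(-b) = (1+B-y)^(-b-1) * (1+B-y) := by
        rw [← Real.rpow_add_one hD.ne']; congr 1; ring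
      rw [div_eq_iff (hpos y hy).ne', hkey y hy, hfeq y hy, e1, e2, e3]
      field_simp
    have hG : HasDerivAt (fun y => (C/(b*B)) * ((1-y)^(b-1) * (1+B-y)^(1-b)))
        ((C/(b*B)) * ((1-b) * B * ((1-x)^(b-2) * (1+B-x)^(-b)))) x := by
      have := ((aux_hasDerivAt_shift 1 (b-1) hA.ne').mul
        (aux_hasDerivAt_shift (1+B) (1-b) hD.ne')).const_mul (C/(b*B))
      refine this.congr_deriv ?_
      have e1 : (1-x)^(b-1) = (1-x)^(b-2) * (1-x) := by
        rw [← Real.rpow_add_one hA.ne']; congr 1; ring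
      have e2 : (1+B-x)^(1-b) = (1+B-x)^(-b) * (1+B-x) := by
        rw [← Real.rpow_add_one hD.ne']; congr 1; ring
      rw [show b-1-1 = b-2 by ring, show 1-b-1 = -b by ring, e1, e2]
      ring
    have hGd : HasDerivAt (fun y => (1-y)^2 * (f y)^2 / (3 * f y - (1-y) * deriv f y))
        ((C/(b*B)) * ((1-b) * B * ((1-x)^(b-2) * (1+B-x)^(-b)))) x :=
      hG.congr_of_eventuallyEq
        (Filter.eventuallyEq_of_mem (Iio_mem_nhds hx1) (fun z hz => hgeq z hz))
    rw [hGd.deriv, hfeq x hx1]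
    have e1 : (1-x)^(b-2) = (1-x)^(b-3) * (1-x) := by
      rw [← Real.rpow_add_one hA.ne']; congr 1; ring
    rw [e1]
    field_simp
    linear_combination -hbid
end

section
/- Let N ≥ 3 be an integer, b = (N-2)/(N-1), and let B > 0 and C > 0 be real constants. With f(x) = C / ((1-x)^{3-b} (1+B-x)^{b}) and U(x) = (N-1)(C/B) · ((1+B-x)/(1-x))^{1/(N-1)}, the identity [−3 f(x) + (1-x) f'(x)] · U(x) + (N-2)(1-x)^2 f(x)^2 = 0 holds for all x ∈ [0,1). -/
open Real

/-- for an integer `N ≥ 3`, `b = (N-2)/(N-1)`, constants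
`B, C > 0`, `f(x) = C / ((1-x)^{3-b} (1+B-x)^b)` and
`U(x) = (N-1)(C/B) ((1+B-x)/(1-x))^{1/(N-1)}`, the identity
`(-3 f(x) + (1-x) f'(x)) U(x) + (N-2)(1-x)² f(x)² = 0` holds on `[0,1)`. -/
theorem family_first_order_identity (N : ℕ) (hN : 3 ≤ N)
    (B C : ℝ) (hB : 0 < B) (hC : 0 < C) (f U : ℝ → ℝ)
    (hf : ∀ x : ℝ, f x =
      C / ((1-x) ^ ((3:ℝ) - ((N:ℝ)-2)/((N:ℝ)-1)) * (1+B-x) ^ (((N:ℝ)-2)/((N:ℝ)-1))))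
    (hU : ∀ x : ℝ, U x =
      ((N:ℝ)-1) * (C/B) * ((1+B-x)/(1-x)) ^ ((1:ℝ)/((N:ℝ)-1))) :
    ∀ x ∈ Set.Ico (0:ℝ) 1,
      (-3 * f x + (1-x) * deriv f x) * U x + ((N:ℝ)-2) * (1-x)^2 * (f x)^2 = 0 := by
  intro x hx
  obtain ⟨hx0, hx1⟩ := hx
  have hN3 : (3:ℝ) ≤ (N:ℝ) := by exact_mod_cast hN
  set nn : ℝ := (N:ℝ) - 1 with hnn_def
  have hnn2 : (2:ℝ) ≤ nn := by rw [hnn_def]; linarith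
  have hnn0 : nn ≠ 0 := by linarith
  set b : ℝ := ((N:ℝ)-2)/nn with hb_def
  set a : ℝ := 3 - b with ha_def
  have hu : (0:ℝ) < 1 - x := by linarith
  have hv : (0:ℝ) < 1 + B - x := by linarith
  have hfe : f = fun y => C / ((1-y) ^ a * (1+B-y) ^ b) := funext hf
  -- derivative
  have h1 : HasDerivAt (fun y : ℝ => 1 - y) (-1) x := by
    simpa using (hasDerivAt_id x).const_sub 1
  have h2 : HasDerivAt (fun y : ℝ => 1 + B - y) (-1) x := by
    simpa using (hasDerivAt_id x).const_sub (1+B)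
  have h3 : HasDerivAt (fun y : ℝ => (1-y) ^ a) ((-1) * a * (1-x) ^ (a-1)) x :=
    h1.rpow_const (Or.inl (ne_of_gt hu))
  have h4 : HasDerivAt (fun y : ℝ => (1+B-y) ^ b) ((-1) * b * (1+B-x) ^ (b-1)) x :=
    h2.rpow_const (Or.inl (ne_of_gt hv))
  have hp := h3.mul h4
  have hpne : (1-x) ^ a * (1+B-x) ^ b ≠ 0 :=
    mul_ne_zero (rpow_pos_of_pos hu a).ne' (rpow_pos_of_pos hv b).ne'
  have hder : HasDerivAt f
      ((0 * ((1-x) ^ a * (1+B-x) ^ b) -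
        C * ((-1) * a * (1-x) ^ (a-1) * (1+B-x) ^ b +
              (1-x) ^ a * ((-1) * b * (1+B-x) ^ (b-1)))) /
        ((1-x) ^ a * (1+B-x) ^ b) ^ 2) x := by
    rw [hfe]
    exact (hasDerivAt_const x C).div hp hpne
  have hder' := hder.deriv
  rw [hf x, hU x, hder']
  -- exponent identities
  have ea : a = 2 + 1/nn := by rw [ha_def, hb_def, hnn_def]; field_simp [show (N:ℝ) - 1 ≠ 0 by linarith]; ring
  have e1 : (1-x) ^ a = (1-x) ^ 2 * (1-x) ^ (1/nn) := by
    rw [ea, rpow_add hu, show (2:ℝ) = ((2:ℕ):ℝ) by norm_num, rpow_natCast]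
  have e2 : (1-x) ^ (a-1) = (1-x) * (1-x) ^ (1/nn) := by
    rw [show a - 1 = 1 + 1/nn by rw [ea]; ring, rpow_add hu, rpow_one]
  have e3 : (1+B-x) ^ b = (1+B-x) * ((1+B-x) ^ (1/nn))⁻¹ := by
    rw [show b = 1 - 1/nn by rw [hb_def, hnn_def]; field_simp [show (N:ℝ) - 1 ≠ 0 by linarith]; ring,
      rpow_sub hv, rpow_one, div_eq_mul_inv]
  have e4 : (1+B-x) ^ (b-1) = ((1+B-x) ^ (1/nn))⁻¹ := by
    rw [show b - 1 = -(1/nn) by rw [hb_def, hnn_def]; field_simp [show (N:ℝ) - 1 ≠ 0 by linarith]; ring, rpow_neg hv.le]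
  have e5 : ((1+B-x)/(1-x)) ^ ((1:ℝ)/nn) = (1+B-x) ^ (1/nn) / (1-x) ^ (1/nn) :=
    div_rpow hv.le hu.le _
  have hN2 : (N:ℝ) - 2 = nn - 1 := by rw [hnn_def]; ring
  rw [e1, e2, e3, e4, e5, hN2]
  have hP : (0:ℝ) < (1-x) ^ (1/nn) := rpow_pos_of_pos hu _
  have hQ : (0:ℝ) < (1+B-x) ^ (1/nn) := rpow_pos_of_pos hv _
  have hb1 : b = (nn-1)/nn := by rw [hb_def, hN2]
  rw [hb1, ha_def, hb1]
  field_simp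
  ring
end

section
/- For every real ξ ≤ 0, lim_{N→∞} (1/N) · f_{*,N}( N/(N+1) + ξ/N ) = 1/(1-ξ)^2, where f_{*,N} denotes the N-player Nash-equilibrium density and the limit is taken over integers N large enough that N/(N+1) + ξ/N ∈ [0, N/(N+1)]. -/
open Real Filter

/-- the scaling limit: for every `ξ ≤ 0`,
`(1/N) f_{*,N}(N/(N+1) + ξ/N) → 1/(1-ξ)²` as `N → ∞`. -/
theorem fstar_scaling_limit (ξ : ℝ) (hξ : ξ ≤ 0) :
    Tendsto (fun N : ℕ => (1/(N:ℝ)) * fstar N ((N:ℝ)/((N:ℝ)+1) + ξ/(N:ℝ)))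
      atTop (nhds (1/(1-ξ)^2)) := by
  have h1ξ : (0:ℝ) < 1 - ξ := by linarith
  have ht : Tendsto (fun N : ℕ => 1/(N:ℝ)) atTop (nhds 0) :=
    tendsto_one_div_atTop_nhds_zero_nat
  have ht1 : Tendsto (fun N : ℕ => 1/((N:ℝ)+1)) atTop (nhds 0) :=
    tendsto_one_div_add_atTop_nhds_zero_nat
  -- limit of b N = (N-2)/(N-1)
  have hb : Tendsto (fun N : ℕ => ((N:ℝ)-2)/((N:ℝ)-1)) atTop (nhds 1) := by
    have h : Tendsto (fun N : ℕ => (1 - 2*(1/(N:ℝ)))/(1 - 1/(N:ℝ))) atTop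
        (nhds ((1 - 2*0)/(1 - 0))) :=
      (tendsto_const_nhds.sub (ht.const_mul 2)).div (tendsto_const_nhds.sub ht) (by norm_num)
    rw [show ((1:ℝ) - 2*0)/(1-0) = 1 by norm_num] at h
    refine h.congr' ?_
    filter_upwards [eventually_ge_atTop 2] with N hN
    have hn : (2:ℝ) ≤ (N:ℝ) := by exact_mod_cast hN
    have hn0 : (N:ℝ) ≠ 0 := by positivity
    have hn1 : (N:ℝ) - 1 ≠ 0 := by linarith [hn]
    field_simp
    try ring
  have hc : Tendsto (fun N : ℕ => (3:ℝ) - ((N:ℝ)-2)/((N:ℝ)-1)) atTop (nhds 2) := by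
    have h : Tendsto (fun N : ℕ => (3:ℝ) - ((N:ℝ)-2)/((N:ℝ)-1)) atTop (nhds (3 - 1)) :=
      tendsto_const_nhds.sub hb
    norm_num at h
    exact h
  -- limit of A N = N/(N+1) - ξ
  have hA : Tendsto (fun N : ℕ => (N:ℝ)/((N:ℝ)+1) - ξ) atTop (nhds (1 - ξ)) := by
    have h : Tendsto (fun N : ℕ => (1 - 1/((N:ℝ)+1)) - ξ) atTop (nhds ((1 - 0) - ξ)) :=
      (tendsto_const_nhds.sub ht1).sub tendsto_const_nhds
    rw [show ((1:ℝ) - 0) - ξ = 1 - ξ by ring] at h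
    refine h.congr fun N => ?_
    have h1 : (0:ℝ) < (N:ℝ) + 1 := by positivity
    field_simp
    ring
  -- limit of B N = 1 - 1/(N+1) - ξ*(1/N)^2
  have hB : Tendsto (fun N : ℕ => 1 - 1/((N:ℝ)+1) - ξ*(1/(N:ℝ))^2) atTop (nhds 1) := by
    have h : Tendsto (fun N : ℕ => 1 - 1/((N:ℝ)+1) - ξ*(1/(N:ℝ))^2) atTop
        (nhds (1 - 0 - ξ*0^2)) :=
      (tendsto_const_nhds.sub ht1).sub ((ht.pow 2).const_mul ξ)
    rw [show (1:ℝ) - 0 - ξ*0^2 = 1 by ring] at h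
    exact h
  -- main limit for the rewritten expression
  have hmain : Tendsto (fun N : ℕ =>
      ((((N:ℝ)/((N:ℝ)+1) - ξ) ^ ((3:ℝ) - ((N:ℝ)-2)/((N:ℝ)-1))) *
        ((1 - 1/((N:ℝ)+1) - ξ*(1/(N:ℝ))^2) ^ (((N:ℝ)-2)/((N:ℝ)-1))))⁻¹) atTop
      (nhds (((1-ξ) ^ (2:ℝ) * (1:ℝ) ^ (1:ℝ))⁻¹)) := by
    exact ((hA.rpow hc (Or.inl (ne_of_gt h1ξ))).mul
      (hB.rpow hb (Or.inl one_ne_zero))).inv₀ (by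
        have : (0:ℝ) < (1-ξ) ^ (2:ℝ) := rpow_pos_of_pos h1ξ _
        simp [Real.one_rpow]
        positivity)
  have hval : ((1-ξ) ^ (2:ℝ) * (1:ℝ) ^ (1:ℝ))⁻¹ = 1/(1-ξ)^2 := by
    rw [Real.one_rpow, mul_one, show (2:ℝ) = ((2:ℕ):ℝ) by norm_num, Real.rpow_natCast]
    rw [one_div]
  rw [hval] at hmain
  refine hmain.congr' ?_
  filter_upwards [eventually_ge_atTop 2] with N hN
  have hn : (2:ℝ) ≤ (N:ℝ) := by exact_mod_cast hN
  have hn0 : (0:ℝ) < (N:ℝ) := by linarith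
  have hn1 : (0:ℝ) < (N:ℝ) - 1 := by linarith
  set n : ℝ := (N:ℝ) with hndef
  set b : ℝ := (n-2)/(n-1) with hbdef
  set e : ℝ := -(2:ℝ)/(n-1) with hedef
  set x : ℝ := n/(n+1) + ξ/n with hxdef
  have hξn : ξ/n ≤ 0 := div_nonpos_of_nonpos_of_nonneg hξ hn0.le
  have hxle : x ≤ n/(n+1) := by rw [hxdef]; linarith
  have hx1 : x < 1 := by
    have h1 : n/(n+1) < 1 := (div_lt_one (by linarith)).2 (by linarith)
    exact lt_of_le_of_lt hxle h1
  have hu : (0:ℝ) < 1 - x := by linarith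
  have hv : (0:ℝ) < n - x := by linarith
  -- unfold fstar
  have hfs : fstar N x = n ^ e / ((1-x) ^ ((3:ℝ) - b) * (n-x) ^ b) := by
    rw [fstar, if_pos hxle]
  -- identify A and B
  have hAeq : n/(n+1) - ξ = n * (1-x) := by
    rw [hxdef]; field_simp; ring
  have hBeq : 1 - 1/(n+1) - ξ*(1/n)^2 = (n-x)/n := by
    rw [hxdef]; field_simp; ring
  -- key exponent identity
  have hSR : n ^ ((3:ℝ) - b) * n ^ e = n * n ^ b := by
    have h1 : n ^ ((3:ℝ) - b) * n ^ e = n ^ ((3:ℝ) - b + e) := (Real.rpow_add hn0 _ _).symm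
    have h2 : n * n ^ b = n ^ ((1:ℝ) + b) := by rw [Real.rpow_add hn0, Real.rpow_one]
    rw [h1, h2]
    congr 1
    rw [hbdef, hedef]
    field_simp
    ring
  have hup : (0:ℝ) < (1-x) ^ ((3:ℝ) - b) := rpow_pos_of_pos hu _
  have hvp : (0:ℝ) < (n-x) ^ b := rpow_pos_of_pos hv _
  have hnbp : (0:ℝ) < n ^ b := rpow_pos_of_pos hn0 _
  have hncp : (0:ℝ) < n ^ ((3:ℝ) - b) := rpow_pos_of_pos hn0 _
  have hnep : (0:ℝ) < n ^ e := rpow_pos_of_pos hn0 _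
  rw [hfs, hAeq, hBeq, Real.mul_rpow hn0.le hu.le, Real.div_rpow hv.le hn0.le]
  rw [eq_comm, inv_eq_one_div]
  field_simp
  nlinarith [hSR, mul_pos hup hvp, mul_pos hnbp hncp,
    mul_pos (mul_pos hup hvp) hnep]
end
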